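/- arXiv:1308.3262 — 3 statements merged into one kernel-verified Lean document; each statement's English description precedes it below -/
import Mathlib

section
/- Let A and B be pattern classes and let f : A → B be a bijection. Then f is an isomorphism of pattern classes if and only if for every τ ∈ A the image of the shadow of τ under f equals the shadow of f(τ), i.e. {f(σ) : σ ∈ ∂τ} = ∂(f(τ)). (Note that ∂τ ⊆ A since A is closed downwards.) -/
/-- A permutation of length `n ≥ 1` in one-line notation: a nonempty list of
natural numbers that is a rearrangement of `1, …, n` where `n` is its length. -/
def IsPermList (l : List ℕ) : Prop := l ≠ [] ∧ l.Perm (List.range' 1 l.length)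

instance (l : List ℕ) : Decidable (IsPermList l) :=
  inferInstanceAs (Decidable (l ≠ [] ∧ l.Perm (List.range' 1 l.length)))

/-- The type of all (finite, nonempty) permutations. -/
abbrev Permu := {l : List ℕ // IsPermList l}

/-- Helper to construct explicit permutations. -/
def p (l : List ℕ) (h : IsPermList l := by decide) : Permu := ⟨l, h⟩

/-- Pattern containment: `σ` is contained in `τ` when some (not necessarily
contiguous) subsequence of `τ` is order isomorphic to `σ`. -/
def Contains (σ τ : Permu) : Prop :=
  ∃ u : List ℕ, u.Sublist τ.val ∧ u.length = σ.val.length ∧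
    ∀ i j : ℕ, i < u.length → j < u.length →
      (u.getD i 0 < u.getD j 0 ↔ σ.val.getD i 0 < σ.val.getD j 0)

/-- A pattern class: a set of permutations closed downwards under containment. -/
def IsPatternClass (A : Set Permu) : Prop :=
  ∀ σ τ : Permu, τ ∈ A → Contains σ τ → σ ∈ A

/-- `Av B` is the set of permutations containing no member of the set `B`. -/
def Av (B : Set Permu) : Set Permu := {π | ∀ β ∈ B, ¬ Contains β π}

/-- An isomorphism of pattern classes is a bijection which preserves and
reflects containment. -/
def IsIso {A B : Set Permu} (f : ↥A → ↥B) : Prop :=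
  Function.Bijective f ∧
  ∀ σ τ : ↥A, Contains σ.val τ.val ↔ Contains (f σ).val (f τ).val

/-- The shadow of `τ`: the permutations of length one less that are contained
in `τ`. -/
def shadow (τ : Permu) : Set Permu :=
  {σ : Permu | σ.val.length + 1 = τ.val.length ∧ Contains σ τ}
/-! ### Auxiliary lemmas -/


lemma permList_nodup {l : List ℕ} (h : IsPermList l) : l.Nodup :=
  h.2.nodup_iff.mpr (List.nodup_range' (s := 1) (n := l.length))

lemma permList_mem {l : List ℕ} (h : IsPermList l) (x : ℕ) :
    x ∈ l ↔ 1 ≤ x ∧ x ≤ l.length := by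
  rw [h.2.mem_iff, List.mem_range'_1]; omega

lemma getD_mem {l : List ℕ} {i : ℕ} (hi : i < l.length) : l.getD i 0 ∈ l := by
  rw [List.getD_eq_getElem l 0 hi]; exact List.getElem_mem hi

/-- `cnt v i` counts the positions `j` with `v_j ≤ v_i`. -/
def cnt (v : List ℕ) (i : ℕ) : ℕ :=
  ((Finset.range v.length).filter (fun j => v.getD j 0 ≤ v.getD i 0)).card

lemma perm_getD_eq_cnt {l : List ℕ} (h : IsPermList l) {i : ℕ} (hi : i < l.length) :
    l.getD i 0 = cnt l i := by
  have hnd : l.Nodup := permList_nodup h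
  have hx : l.getD i 0 ∈ l := getD_mem hi
  have hcard : ((Finset.range l.length).filter (fun j => l.getD j 0 ≤ l.getD i 0)).card
      = (Finset.Icc 1 (l.getD i 0)).card := by
    apply Finset.card_bij (fun j _ => l.getD j 0)
    · intro j hj
      simp only [Finset.mem_filter, Finset.mem_range] at hj
      have hjm := (permList_mem h _).mp (getD_mem hj.1)
      simp only [Finset.mem_Icc]
      exact ⟨hjm.1, hj.2⟩
    · intro j₁ h₁ j₂ h₂ hEq
      simp only [Finset.mem_filter, Finset.mem_range] at h₁ h₂
      rw [List.getD_eq_getElem l 0 h₁.1, List.getD_eq_getElem l 0 h₂.1] at hEq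
      exact (List.Nodup.getElem_inj_iff hnd).mp hEq
    · intro k hk
      simp only [Finset.mem_Icc] at hk
      have hkl : k ∈ l :=
        (permList_mem h k).mpr ⟨hk.1, le_trans hk.2 ((permList_mem h _).mp hx).2⟩
      obtain ⟨j, hj, hjk⟩ := List.mem_iff_getElem.mp hkl
      refine ⟨j, ?_, ?_⟩
      · simp only [Finset.mem_filter, Finset.mem_range]
        exact ⟨hj, by rw [List.getD_eq_getElem l 0 hj, hjk]; exact hk.2⟩
      · rw [List.getD_eq_getElem l 0 hj, hjk]
  have h1 : 1 ≤ l.getD i 0 := ((permList_mem h _).mp hx).1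
  rw [cnt, hcard, Nat.card_Icc]
  omega

lemma cnt_congr {u v : List ℕ} (hl : u.length = v.length)
    (hp : ∀ i j : ℕ, i < u.length → j < u.length →
      (u.getD i 0 < u.getD j 0 ↔ v.getD i 0 < v.getD j 0))
    {i : ℕ} (hi : i < u.length) : cnt u i = cnt v i := by
  unfold cnt
  rw [← hl]
  congr 1
  apply Finset.filter_congr
  intro j hj
  simp only [Finset.mem_range] at hj
  rw [← Nat.not_lt, ← Nat.not_lt, hp i j hi hj]

lemma contains_length_le {σ τ : Permu} (h : Contains σ τ) :
    σ.val.length ≤ τ.val.length := by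
  obtain ⟨u, hs, hl, -⟩ := h
  have := hs.length_le
  omega


lemma contains_refl (σ : Permu) : Contains σ σ :=
  ⟨σ.val, List.Sublist.refl _, rfl, fun _ _ _ _ => Iff.rfl⟩

lemma contains_antisymm {σ τ : Permu} (h : Contains σ τ)
    (hl : σ.val.length = τ.val.length) : σ = τ := by
  obtain ⟨u, hsub, hlen, hpat⟩ := h
  have hu : u = τ.val := hsub.eq_of_length (by omega)
  subst hu
  apply Subtype.ext
  apply List.ext_getElem hl
  intro n h₁ h₂
  have e1 : σ.val.getD n 0 = cnt σ.val n := perm_getD_eq_cnt σ.prop h₁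
  have e2 : τ.val.getD n 0 = cnt τ.val n := perm_getD_eq_cnt τ.prop h₂
  have e3 : cnt τ.val n = cnt σ.val n := cnt_congr hlen hpat h₂
  rw [← List.getD_eq_getElem σ.val 0 h₁, ← List.getD_eq_getElem τ.val 0 h₂, e1, e2, e3]

/-- The rank of `x` in `v`. -/
def rk (v : List ℕ) (x : ℕ) : ℕ := (v.filter (fun y => y ≤ x)).length

lemma rk_le_rk {v : List ℕ} {x y : ℕ} (hxy : x ≤ y) : rk v x ≤ rk v y :=
  (List.monotone_filter_right v (fun a ha => by simp at ha ⊢; omega)).length_le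

lemma rk_lt_rk {v : List ℕ} {x y : ℕ} (hy : y ∈ v) (hxy : x < y) : rk v x < rk v y := by
  have hsub : (v.filter (fun a => a ≤ x)).Sublist (v.filter (fun a => a ≤ y)) :=
    List.monotone_filter_right v (fun a ha => by simp at ha ⊢; omega)
  rcases Nat.lt_or_ge (rk v x) (rk v y) with h | h
  · exact h
  · exfalso
    have heq := hsub.eq_of_length (le_antisymm hsub.length_le h)
    have hy' : y ∈ v.filter (fun a => a ≤ y) := List.mem_filter.mpr ⟨hy, by simp⟩
    rw [← heq] at hy'
    have := (List.mem_filter.mp hy').2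
    simp at this; omega

lemma rk_lt_iff {v : List ℕ} {x y : ℕ} (hy : y ∈ v) :
    rk v x < rk v y ↔ x < y := by
  constructor
  · intro h
    by_contra hc
    push_neg at hc
    have := rk_le_rk (v := v) hc
    omega
  · exact rk_lt_rk hy

/-- Standardization of a list of distinct numbers. -/
def std (v : List ℕ) : List ℕ := v.map (rk v)

lemma std_length (v : List ℕ) : (std v).length = v.length := List.length_map _

lemma map_getD {f : ℕ → ℕ} {u : List ℕ} {i : ℕ} (hi : i < u.length) :
    (u.map f).getD i 0 = f (u.getD i 0) := by
  rw [List.getD_eq_getElem _ 0 (by simpa using hi), List.getD_eq_getElem _ 0 hi,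
    List.getElem_map]

lemma std_pattern {v : List ℕ} {i j : ℕ} (hi : i < v.length) (hj : j < v.length) :
    (std v).getD i 0 < (std v).getD j 0 ↔ v.getD i 0 < v.getD j 0 := by
  rw [std, map_getD hi, map_getD hj]
  exact rk_lt_iff (getD_mem hj)

lemma std_isPermList {v : List ℕ} (hv : v.Nodup) (hne : v ≠ []) :
    IsPermList (std v) := by
  have hinj : ∀ x ∈ v, ∀ y ∈ v, rk v x = rk v y → x = y := by
    intro x hx y hy hEq
    by_contra hne'
    rcases Nat.lt_or_ge x y with h | h
    · exact absurd hEq (Nat.ne_of_lt (rk_lt_rk hy h))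
    · have hyx : y < x := by omega
      exact absurd hEq.symm (Nat.ne_of_lt (rk_lt_rk hx hyx))
  have hnd : (std v).Nodup := List.Nodup.map_on hinj hv
  constructor
  · simp [std, hne]
  · have hsubset : std v ⊆ List.range' 1 (std v).length := by
      intro x hxm
      obtain ⟨a, ha, rfl⟩ := List.mem_map.mp hxm
      rw [List.mem_range'_1]
      have h1 : a ∈ v.filter (fun y => y ≤ a) := List.mem_filter.mpr ⟨ha, by simp⟩
      have hpos : 0 < rk v a := by
        rw [rk]
        exact List.length_pos_iff.mpr (List.ne_nil_of_mem h1)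
      have hle : rk v a ≤ v.length := List.filter_sublist.length_le
      rw [std_length]
      omega
    exact (hnd.subperm hsubset).perm_of_length_le (by simp)

lemma std_unique {l v : List ℕ} (hl : IsPermList l) (hv : v.Nodup)
    (hlen : v.length = l.length)
    (hp : ∀ i j : ℕ, i < v.length → j < v.length →
      (v.getD i 0 < v.getD j 0 ↔ l.getD i 0 < l.getD j 0)) :
    l = std v := by
  have hvne : v ≠ [] := by
    intro h
    apply hl.1
    rw [h] at hlen
    exact List.length_eq_zero_iff.mp hlen.symm
  have hstd := std_isPermList hv hvne
  apply List.ext_getElem (by rw [std_length]; omega)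
  intro n h₁ h₂
  have hn : n < v.length := by omega
  have e1 : l.getD n 0 = cnt l n := perm_getD_eq_cnt hl h₁
  have e2 : (std v).getD n 0 = cnt (std v) n := perm_getD_eq_cnt hstd h₂
  have e3 : cnt v n = cnt l n := cnt_congr hlen hp hn
  have e4 : cnt (std v) n = cnt v n := by
    apply cnt_congr (std_length v) _ (by rw [std_length]; exact hn)
    intro i j hi hj
    rw [std_length] at hi hj
    exact std_pattern hi hj
  rw [← List.getD_eq_getElem l 0 h₁, ← List.getD_eq_getElem (std v) 0 h₂, e1, e2, e4, e3]

lemma contains_via_std {σ τ : Permu} (h : Contains σ τ) :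
    ∃ v : List ℕ, v.Sublist τ.val ∧ v.length = σ.val.length ∧ σ.val = std v := by
  obtain ⟨u, hsub, hlen, hpat⟩ := h
  have hund : u.Nodup := List.Nodup.sublist hsub (permList_nodup τ.prop)
  exact ⟨u, hsub, hlen, std_unique σ.prop hund hlen hpat⟩

lemma contains_trans {a b c : Permu} (hab : Contains a b) (hbc : Contains b c) :
    Contains a c := by
  obtain ⟨u, hub, hul, hup⟩ := hab
  obtain ⟨w, hwc, hwl, hbw⟩ := contains_via_std hbc
  rw [hbw] at hub
  obtain ⟨u₀, hu₀w, rfl⟩ := List.sublist_map_iff.mp hub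
  refine ⟨u₀, hu₀w.trans hwc, by simpa using hul, ?_⟩
  intro i j hi hj
  have hi' : i < (u₀.map (rk w)).length := by simpa using hi
  have hj' : j < (u₀.map (rk w)).length := by simpa using hj
  rw [← hup i j hi' hj', map_getD hi, map_getD hj]
  exact (rk_lt_iff (hu₀w.subset (getD_mem hj))).symm

lemma sublist_drop_one {u w : List ℕ} (h : u.Sublist w) :
    u.length < w.length → ∃ v : List ℕ, u.Sublist v ∧ v.Sublist w ∧ v.length + 1 = w.length := by
  induction h with
  | slnil => intro h; simp at h
  | cons a h ih => intro _; exact ⟨_, h, List.sublist_cons_self a _, rfl⟩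
  | cons_cons a h ih =>
    intro hlt
    obtain ⟨v, h1, h2, h3⟩ := ih (by simpa using hlt)
    exact ⟨a :: v, h1.cons₂ a, h2.cons₂ a, by simp [h3]⟩

lemma contains_step {σ τ : Permu} (h : Contains σ τ) (hlt : σ.val.length < τ.val.length) :
    ∃ ρ : Permu, ρ ∈ shadow τ ∧ Contains σ ρ := by
  obtain ⟨u, hsub, hlen, hpat⟩ := h
  obtain ⟨v, huv, hvτ, hvl⟩ := sublist_drop_one hsub (by omega)
  have hvnd : v.Nodup := List.Nodup.sublist hvτ (permList_nodup τ.prop)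
  have hσpos : 0 < σ.val.length := List.length_pos_iff.mpr σ.prop.1
  have hvne : v ≠ [] := by
    intro hv0
    rw [hv0] at hvl
    simp at hvl
    omega
  refine ⟨⟨std v, std_isPermList hvnd hvne⟩, ⟨?_, ?_⟩, ?_⟩
  · rw [std_length]; exact hvl
  · refine ⟨v, hvτ, (std_length v).symm, ?_⟩
    intro i j hi hj
    exact (std_pattern hi hj).symm
  · refine ⟨u.map (rk v), huv.map (rk v), by simpa using hlen, ?_⟩
    intro i j hi hj
    have hi' : i < u.length := by simpa using hi
    have hj' : j < u.length := by simpa using hj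
    rw [map_getD hi', map_getD hj', rk_lt_iff (huv.subset (getD_mem hj'))]
    exact hpat i j hi' hj'

lemma contains_iff_rtg {A : Set Permu} (hA : IsPatternClass A) (a b : ↥A) :
    Contains a.val b.val ↔
      Relation.ReflTransGen (fun x y : ↥A => x.val ∈ shadow y.val) a b := by
  constructor
  · have key : ∀ n (a b : ↥A), b.val.val.length ≤ n → Contains a.val b.val →
        Relation.ReflTransGen (fun x y : ↥A => x.val ∈ shadow y.val) a b := by
      intro n
      induction n with
      | zero =>
        intro a b hb _
        have := List.length_pos_iff.mpr b.val.prop.1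
        omega
      | succ n ih =>
        intro a b hb hab
        have hle := contains_length_le hab
        rcases Nat.eq_or_lt_of_le hle with heq | hlt
        · have hab' : a = b := Subtype.ext (contains_antisymm hab heq)
          rw [hab']
        · obtain ⟨ρ, hρs, hρc⟩ := contains_step hab hlt
          have hρA : ρ ∈ A := hA ρ b.val b.prop hρs.2
          have hlen : ρ.val.length + 1 = b.val.val.length := hρs.1
          exact (ih a ⟨ρ, hρA⟩ (by show ρ.val.length ≤ n; omega) hρc).tail hρs
    exact fun h => key b.val.val.length a b le_rfl h
  · intro h
    induction h with
    | refl => exact contains_refl _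
    | tail h1 h2 ih => exact contains_trans ih h2.2

lemma shadow_iff_cover {C : Set Permu} (hC : IsPatternClass C) {σ τ : Permu} (hτ : τ ∈ C) :
    σ ∈ shadow τ ↔
      (Contains σ τ ∧ σ ≠ τ ∧
        ∀ ρ : ↥C, Contains σ ρ.val → Contains ρ.val τ → ρ.val = σ ∨ ρ.val = τ) := by
  constructor
  · rintro ⟨hlen, hcon⟩
    refine ⟨hcon, ?_, ?_⟩
    · intro h; rw [h] at hlen; omega
    · intro ρ h1 h2
      have l1 := contains_length_le h1
      have l2 := contains_length_le h2
      rcases Nat.eq_or_lt_of_le l1 with he | hl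
      · left; exact (contains_antisymm h1 he).symm
      · right; exact contains_antisymm h2 (by omega)
  · rintro ⟨hcon, hne, hcov⟩
    have hle := contains_length_le hcon
    rcases Nat.eq_or_lt_of_le hle with he | hl
    · exact absurd (contains_antisymm hcon he) hne
    by_cases hsh : σ.val.length + 1 = τ.val.length
    · exact ⟨hsh, hcon⟩
    exfalso
    obtain ⟨ρ, hρs, hρc⟩ := contains_step hcon hl
    have hρC : ρ ∈ C := hC ρ τ hτ hρs.2
    have hρl := hρs.1
    rcases hcov ⟨ρ, hρC⟩ hρc hρs.2 with h | h
    · have h' : ρ = σ := h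
      rw [h'] at hρl; omega
    · have h' : ρ = τ := h
      rw [h'] at hρl; omega

/-- a bijection between pattern classes is an isomorphism iff it
maps shadows to shadows. -/
theorem statement_0 (A B : Set Permu) (hA : IsPatternClass A) (hB : IsPatternClass B)
    (f : ↥A → ↥B) (hf : Function.Bijective f) :
    (∀ σ τ : ↥A, Contains σ.val τ.val ↔ Contains (f σ).val (f τ).val) ↔
    (∀ τ : ↥A, {π : Permu | ∃ σ : ↥A, σ.val ∈ shadow τ.val ∧ (f σ).val = π}
        = shadow (f τ).val) := by
  constructor
  · intro hc τ
    ext π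
    simp only [Set.mem_setOf_eq]
    constructor
    · rintro ⟨σ, hσ, rfl⟩
      rw [shadow_iff_cover hB (f τ).prop]
      obtain ⟨C1, C2, C3⟩ := (shadow_iff_cover hA τ.prop).mp hσ
      refine ⟨(hc σ τ).mp C1, ?_, ?_⟩
      · intro h
        exact C2 (congrArg Subtype.val (hf.1 (Subtype.ext h)))
      · intro ρ h1 h2
        obtain ⟨ρ₀, rfl⟩ := hf.2 ρ
        rcases C3 ρ₀ ((hc σ ρ₀).mpr h1) ((hc ρ₀ τ).mpr h2) with h | h
        · left; exact congrArg (fun x => (f x).val) (Subtype.ext h)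
        · right; exact congrArg (fun x => (f x).val) (Subtype.ext h)
    · intro hπ
      have hπB : π ∈ B := hB π (f τ).val (f τ).prop hπ.2
      obtain ⟨σ, hσ⟩ := hf.2 ⟨π, hπB⟩
      have hval : (f σ).val = π := congrArg Subtype.val hσ
      refine ⟨σ, ?_, hval⟩
      rw [shadow_iff_cover hA τ.prop]
      rw [← hval] at hπ
      obtain ⟨C1, C2, C3⟩ := (shadow_iff_cover hB (f τ).prop).mp hπ
      refine ⟨(hc σ τ).mpr C1, ?_, ?_⟩
      · intro h
        exact C2 (congrArg (fun x => (f x).val) (Subtype.ext h))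
      · intro ρ h1 h2
        rcases C3 (f ρ) ((hc σ ρ).mp h1) ((hc ρ τ).mp h2) with h | h
        · left; exact congrArg Subtype.val (hf.1 (Subtype.ext h))
        · right; exact congrArg Subtype.val (hf.1 (Subtype.ext h))
  · intro hs
    have hstep : ∀ σ τ : ↥A, σ.val ∈ shadow τ.val ↔ (f σ).val ∈ shadow (f τ).val := by
      intro σ τ
      constructor
      · intro h
        rw [← hs τ]
        exact ⟨σ, h, rfl⟩
      · intro h
        rw [← hs τ] at h
        obtain ⟨σ', h', he⟩ := h
        rwa [hf.1 (Subtype.ext he)] at h'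
    intro σ τ
    rw [contains_iff_rtg hA, contains_iff_rtg hB]
    constructor
    · intro h
      induction h with
      | refl => exact Relation.ReflTransGen.refl
      | tail h1 h2 ih => exact ih.tail ((hstep _ _).mp h2)
    · have key : ∀ x y : ↥B,
          Relation.ReflTransGen (fun u v : ↥B => u.val ∈ shadow v.val) x y →
          ∀ a b : ↥A, f a = x → f b = y →
          Relation.ReflTransGen (fun u v : ↥A => u.val ∈ shadow v.val) a b := by
        intro x y h
        induction h with
        | refl =>
          intro a b ha hb
          obtain rfl := hf.1 (ha.trans hb.symm)
          exact Relation.ReflTransGen.refl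
        | @tail c d h1 h2 ih =>
          intro a b ha hb
          obtain ⟨c₀, hc₀⟩ := hf.2 c
          exact (ih a c₀ ha hc₀).tail ((hstep c₀ b).mpr (by rw [hc₀, hb]; exact h2))
      exact fun h => key _ _ h σ τ rfl rfl
end

section
/- Let σ and τ be permutations. Then ∂σ = ∂τ if and only if one of the following holds: {σ, τ} = {12, 21}; or {σ, τ} ⊆ {132, 213, 231, 312}; or {σ, τ} = {2413, 3142}; or σ = τ. -/
namespace Smith

/-- standardization map after deleting value `v`. -/
def pcol (v x : ℕ) : ℕ := if v < x then x - 1 else x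

/-- inverse of `pcol v` (on values `≠ v`). -/
def plift (v x : ℕ) : ℕ := if v ≤ x then x + 1 else x

/-- delete value `v` from one-line notation and standardize. -/
def Dv (s : List ℕ) (v : ℕ) : List ℕ := (s.erase v).map (pcol v)

def Dlist (s : List ℕ) : List (List ℕ) := s.map (fun v => Dv s v)

def DsetEqB (s t : List ℕ) : Prop :=
  (∀ ρ ∈ Dlist s, ρ ∈ Dlist t) ∧ (∀ ρ ∈ Dlist t, ρ ∈ Dlist s)

instance (s t : List ℕ) : Decidable (DsetEqB s t) := by unfold DsetEqB; infer_instance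

def DsetEq (s t : List ℕ) : Prop :=
  ∀ ρ : List ℕ, (∃ v ∈ s, ρ = Dv s v) ↔ (∃ v ∈ t, ρ = Dv t v)

def IsP (n : ℕ) (s : List ℕ) : Prop := s.Perm (List.range' 1 n)

/-! ### arithmetic lemmas about `pcol`/`plift` -/

lemma pcol_lt_iff {v x y : ℕ} (hx : x ≠ v) (hy : y ≠ v) :
    pcol v x < pcol v y ↔ x < y := by
  unfold pcol; split_ifs <;> omega

lemma pcol_inj {v x y : ℕ} (hx : x ≠ v) (hy : y ≠ v) (h : pcol v x = pcol v y) : x = y := by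
  unfold pcol at h; split_ifs at h <;> omega

lemma plift_pcol {v x : ℕ} (hx : x ≠ v) : plift v (pcol v x) = x := by
  unfold pcol plift; split_ifs <;> omega

lemma pcol_comm {a b x : ℕ} (hab : a ≠ b) (hax : x ≠ a) (hbx : x ≠ b) :
    pcol (pcol a b) (pcol a x) = pcol (pcol b a) (pcol b x) := by
  unfold pcol; split_ifs <;> omega

lemma pcol_ne_top {h z m : ℕ} (hz : z ≤ m) (hh : h ≤ m) (hzh : z ≠ h) :
    pcol h z ≠ m := by
  unfold pcol; split_ifs <;> omega

lemma pcol_top {h n : ℕ} (hh : h < n) : pcol h n = n - 1 := by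
  unfold pcol; split_ifs <;> omega

end Smith

namespace Smith

/-! ### list utilities -/

lemma map_id_of {f : ℕ → ℕ} : ∀ {l : List ℕ}, (∀ x ∈ l, f x = x) → l.map f = l := by
  intro l h
  induction l with
  | nil => rfl
  | cons a t ih => simp only [List.map_cons]; rw [h a (by simp), ih (fun x hx => h x (by simp [hx]))]

lemma map_erase_of_unique {f : ℕ → ℕ} {b : ℕ} :
    ∀ {l : List ℕ}, (∀ x ∈ l, f x = f b → x = b) →
      (l.map f).erase (f b) = (l.erase b).map f := by
  intro l
  induction l with
  | nil => intro _; rfl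
  | cons a t ih =>
    intro h
    by_cases hab : a = b
    · subst hab; simp [List.erase_cons_head]
    · have hfa : f a ≠ f b := fun hf => hab (h a (by simp) hf)
      simp only [List.map_cons, List.erase_cons]
      rw [if_neg (by simpa using hfa), if_neg (by simpa using hab),
        List.map_cons, ih (fun x hx hfx => h x (by simp [hx]) hfx)]

lemma cons_eq_append_singleton {a : ℕ} :
    ∀ {γ : List ℕ}, a :: γ = γ ++ [a] → ∀ b ∈ γ, b = a := by
  intro γ
  induction γ with
  | nil => intro _ b hb; simp at hb
  | cons c γ' ih =>
    intro h b hb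
    simp only [List.cons_append, List.cons.injEq] at h
    obtain ⟨rfl, h2⟩ := h
    rcases List.mem_cons.1 hb with rfl | hb'
    · rfl
    · exact ih h2 b hb'

lemma headD_mem : ∀ {l : List ℕ}, l ≠ [] → l.headD 0 ∈ l := by
  intro l h; cases l with
  | nil => exact absurd rfl h
  | cons a t => simp

lemma lastD_cons {a : ℕ} {L : List ℕ} (h : L ≠ []) : (a :: L).getLastD 0 = L.getLastD 0 := by
  cases L with
  | nil => exact absurd rfl h
  | cons b t => simp [List.getLastD]

lemma lastD_mem : ∀ {l : List ℕ}, l ≠ [] → l.getLastD 0 ∈ l := by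
  intro l h
  induction l with
  | nil => exact absurd rfl h
  | cons a t ih =>
    cases t with
    | nil => simp [List.getLastD]
    | cons b u => rw [lastD_cons (by simp)]; exact List.mem_cons_of_mem _ (ih (by simp))

lemma map_lastD {f : ℕ → ℕ} : ∀ {l : List ℕ}, l ≠ [] → (l.map f).getLastD 0 = f (l.getLastD 0) := by
  intro l h
  induction l with
  | nil => exact absurd rfl h
  | cons a t ih =>
    cases t with
    | nil => simp [List.getLastD]
    | cons b u =>
      rw [List.map_cons, lastD_cons (by simp), lastD_cons (by simp)]
      exact ih (by simp)

lemma erase_lastD : ∀ {l : List ℕ} {v : ℕ}, v ∈ l → v ≠ l.getLastD 0 →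
    (l.erase v).getLastD 0 = l.getLastD 0 ∧ l.erase v ≠ [] := by
  intro l
  induction l with
  | nil => intro v hv; simp at hv
  | cons a t ih =>
    intro v hv hne
    by_cases hva : v = a
    · subst hva
      have ht : t ≠ [] := by
        rintro rfl; exact hne (by simp [List.getLastD])
      rw [List.erase_cons_head]
      exact ⟨(lastD_cons ht).symm, ht⟩
    · have hvt : v ∈ t := by rcases List.mem_cons.1 hv with h | h; exact absurd h hva; exact h
      have ht : t ≠ [] := by rintro rfl; simp at hvt
      have hne' : v ≠ t.getLastD 0 := by rwa [lastD_cons ht] at hne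
      obtain ⟨h1, h2⟩ := ih hvt hne'
      rw [List.erase_cons, if_neg (by simpa using (fun h => hva h.symm : a = v → False))]
      constructor
      · rw [lastD_cons h2, h1, lastD_cons ht]
      · simp

lemma erase_of_lastD : ∀ {l : List ℕ}, l.Nodup → l ≠ [] → l.erase (l.getLastD 0) = l.dropLast := by
  intro l
  induction l with
  | nil => intro _ h; exact absurd rfl h
  | cons a t ih =>
    intro hnd _
    cases t with
    | nil => simp [List.getLastD]
    | cons b u =>
      have ht : (b :: u) ≠ [] := by simp
      have he : (b::u).getLastD 0 ∈ b :: u := lastD_mem ht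
      have hane : a ≠ (b::u).getLastD 0 := by
        intro h; rw [h] at hnd; exact (List.nodup_cons.1 hnd).1 he
      rw [lastD_cons ht, List.erase_cons,
        if_neg (by simpa using hane),
        ih (List.nodup_cons.1 hnd).2 ht, List.dropLast_cons₂]

lemma dropLast_append_lastD : ∀ {l : List ℕ}, l ≠ [] → l.dropLast ++ [l.getLastD 0] = l := by
  intro l
  induction l with
  | nil => intro h; exact absurd rfl h
  | cons a t ih =>
    intro _
    cases t with
    | nil => simp [List.getLastD]
    | cons b u => rw [lastD_cons (by simp), List.dropLast_cons₂, List.cons_append, ih (by simp)]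

end Smith

namespace Smith

/-! ### insertIdx / indexOf -/

lemma insertIdx_erase_indexOf : ∀ {l : List ℕ} {v : ℕ}, v ∈ l →
    (l.erase v).insertIdx (l.idxOf v) v = l := by
  intro l
  induction l with
  | nil => intro v hv; simp at hv
  | cons a t ih =>
    intro v hv
    by_cases hva : v = a
    · subst hva; simp [List.erase_cons_head]
    · have hvt : v ∈ t := by rcases List.mem_cons.1 hv with h | h; exact absurd h hva; exact h
      rw [List.erase_cons, if_neg (by simpa using fun h => hva h.symm),
        List.idxOf_cons, Bool.cond_eq_ite, if_neg (by simpa using fun h => hva h.symm)]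
      simpa [List.insertIdx_succ_cons] using ih hvt

lemma indexOf_insertIdx {a : ℕ} : ∀ {l : List ℕ} {i : ℕ}, a ∉ l → i ≤ l.length →
    (l.insertIdx i a).idxOf a = i := by
  intro l
  induction l with
  | nil =>
    intro i _ hi
    have : i = 0 := by simpa using hi
    subst this; simp
  | cons b t ih =>
    intro i ha hi
    cases i with
    | zero => simp
    | succ j =>
      have hab : a ≠ b := by simp at ha; tauto
      rw [List.insertIdx_succ_cons, List.idxOf_cons, Bool.cond_eq_ite,
        if_neg (by simpa using fun h => hab h.symm),
        ih (by simp at ha; tauto) (by simpa using hi)]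

lemma insertIdx_inj {a : ℕ} {l : List ℕ} {i j : ℕ} (ha : a ∉ l)
    (hi : i ≤ l.length) (hj : j ≤ l.length) (h : l.insertIdx i a = l.insertIdx j a) : i = j := by
  rw [← indexOf_insertIdx ha hi, ← indexOf_insertIdx ha hj, h]

lemma map_insertIdx {f : ℕ → ℕ} {a : ℕ} :
    ∀ {l : List ℕ} {i : ℕ}, (l.insertIdx i a).map f = (l.map f).insertIdx i (f a) := by
  intro l
  induction l with
  | nil =>
    intro i
    cases i <;> simp [List.insertIdx]
  | cons b t ih =>
    intro i
    cases i with
    | zero => simp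
    | succ j => simp [List.insertIdx_succ_cons, ih]

lemma headD_insertIdx_succ {a : ℕ} {l : List ℕ} {i : ℕ} (h : l ≠ []) :
    (l.insertIdx (i+1) a).headD 0 = l.headD 0 := by
  cases l with
  | nil => exact absurd rfl h
  | cons b t => simp [List.insertIdx_succ_cons]

lemma insertIdx_length_self {a : ℕ} : ∀ {l : List ℕ}, l.insertIdx l.length a = l ++ [a] := by
  intro l
  induction l with
  | nil => rfl
  | cons b t ih => simpa [List.insertIdx_succ_cons] using ih

lemma dropLast_insertIdx {a : ℕ} : ∀ {l : List ℕ} {i : ℕ}, i < l.length →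
    (l.insertIdx i a).dropLast = l.dropLast.insertIdx i a := by
  intro l
  induction l with
  | nil => intro i hi; simp at hi
  | cons b t ih =>
    intro i hi
    cases i with
    | zero =>
      rw [List.insertIdx_zero, List.dropLast_cons₂]
      cases t with
      | nil => simp
      | cons c u => rw [List.dropLast_cons₂, List.insertIdx_zero]
    | succ j =>
      have hj : j < t.length := by simpa using hi
      have ht : t ≠ [] := by intro h; rw [h] at hj; simp at hj
      have hne : t.insertIdx j a ≠ [] := by
        intro h
        have := congrArg List.length h
        simp [List.length_insertIdx, Nat.le_of_lt hj] at this
      rw [List.insertIdx_succ_cons, List.dropLast_cons_of_ne_nil hne, ih hj,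
        List.dropLast_cons_of_ne_nil ht, List.insertIdx_succ_cons]

lemma lastD_insertIdx {a : ℕ} : ∀ {l : List ℕ} {i : ℕ}, i < l.length →
    (l.insertIdx i a).getLastD 0 = l.getLastD 0 := by
  intro l
  induction l with
  | nil => intro i hi; simp at hi
  | cons b t ih =>
    intro i hi
    cases i with
    | zero =>
      rw [List.insertIdx_zero, lastD_cons (by simp)]
    | succ j =>
      have hj : j < t.length := by simpa using hi
      have ht : t ≠ [] := by intro h; rw [h] at hj; simp at hj
      have hne : t.insertIdx j a ≠ [] := by
        intro h
        have := congrArg List.length h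
        simp [List.length_insertIdx, Nat.le_of_lt hj] at this
      rw [List.insertIdx_succ_cons, lastD_cons hne, ih hj, lastD_cons ht]

end Smith

namespace Smith

/-! ### facts about `IsP` -/

lemma IsP.length {n : ℕ} {s : List ℕ} (h : IsP n s) : s.length = n := by
  simpa using h.length_eq

lemma IsP.nodup {n : ℕ} {s : List ℕ} (h : IsP n s) : s.Nodup :=
  h.nodup_iff.2 (List.nodup_range' 1 Nat.one_pos)

lemma IsP.mem_bounds {n : ℕ} {s : List ℕ} (h : IsP n s) {x : ℕ} :
    x ∈ s ↔ 1 ≤ x ∧ x ≤ n := by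
  rw [List.Perm.mem_iff h, List.mem_range'_1]; omega

lemma map_pcol_range' {v : ℕ} : ∀ (k s : ℕ), v < s → (List.range' s k).map (pcol v) = List.range' (s-1) k := by
  intro k
  induction k with
  | zero => intro s _; rfl
  | succ m ih =>
    intro s hs
    rw [List.range'_succ, List.map_cons, ih (s+1) (by omega), List.range'_succ]
    have h1 : pcol v s = s - 1 := by unfold pcol; split_ifs <;> omega
    have h2 : s - 1 + 1 = s := by omega
    rw [h1, h2]
    rfl

lemma Dv_isP {n : ℕ} {s : List ℕ} (h : IsP n s) {v : ℕ} (hv : v ∈ s) :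
    IsP (n-1) (Dv s v) := by
  have hv' : 1 ≤ v ∧ v ≤ n := (h.mem_bounds).1 hv
  have hperm : (s.erase v).Perm ((List.range' 1 n).erase v) := h.erase v
  have hsplit : List.range' 1 n = List.range' 1 (v-1) ++ List.range' v (n-v+1) := by
    have := List.range'_append (s := 1) (m := v-1) (n := n-v+1) (step := 1)
    simp only [one_mul] at this
    rw [show 1 + (v-1) = v by omega] at this
    rw [this]
    congr 1
    omega
  have hvcons : List.range' v (n-v+1) = v :: List.range' (v+1) (n-v) := by
    rw [show n-v+1 = (n-v)+1 by omega, List.range'_succ]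
  have herase : (List.range' 1 n).erase v = List.range' 1 (v-1) ++ List.range' (v+1) (n-v) := by
    rw [hsplit, hvcons, List.erase_append_right, List.erase_cons_head]
    intro hmem
    rw [List.mem_range'_1] at hmem
    omega
  have hmap : ((List.range' 1 n).erase v).map (pcol v) = List.range' 1 (n-1) := by
    rw [herase, List.map_append, map_pcol_range' (n-v) (v+1) (by omega),
      map_id_of (fun x hx => by
        rw [List.mem_range'_1] at hx
        unfold pcol; split_ifs <;> omega)]
    have := List.range'_append (s := 1) (m := v-1) (n := n-v) (step := 1)
    simp only [one_mul] at this
    rw [show 1 + (v-1) = v by omega] at this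
    rw [show v + 1 - 1 = v by omega, this]
    congr 1
    omega
  unfold Dv IsP
  exact hmap ▸ hperm.map (pcol v)

/-! ### rigidity -/

lemma countP_congr_idx {pq : ℕ → Bool} {q : ℕ → Bool} :
    ∀ (s t : List ℕ), s.length = t.length →
      (∀ i < s.length, pq (s.getD i 0) = q (t.getD i 0)) →
      s.countP pq = t.countP q := by
  intro s
  induction s with
  | nil =>
    intro t hlen _
    cases t with
    | nil => rfl
    | cons b u => simp at hlen
  | cons a s' ih =>
    intro t hlen hiff
    cases t with
    | nil => simp at hlen
    | cons b u =>
      rw [List.countP_cons, List.countP_cons,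
        ih u (by simpa using hlen) (fun i hi => by simpa using hiff (i+1) (by simpa using hi))]
      have := hiff 0 (by simp)
      simp only [List.getD_cons_zero] at this
      rw [this]

lemma countP_le_range' {v : ℕ} : ∀ (k s : ℕ),
    (List.range' s k).countP (fun x => decide (x ≤ v)) = min (v + 1 - s) k := by
  intro k
  induction k with
  | zero => intro s; simp
  | succ m ih =>
    intro s
    rw [List.range'_succ, List.countP_cons, ih (s+1)]
    simp only [decide_eq_true_eq]
    split_ifs <;> omega

lemma perm_val_eq {m : ℕ} {s : List ℕ} (h : IsP m s) {i : ℕ} (hi : i < m) :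
    s.getD i 0 = s.countP (fun x => decide (x ≤ s.getD i 0)) := by
  have hlen : s.length = m := h.length
  have hmem : s.getD i 0 ∈ s := by
    rw [List.getD_eq_getElem _ _ (by omega)]
    exact List.getElem_mem _
  have hb : 1 ≤ s.getD i 0 ∧ s.getD i 0 ≤ m := h.mem_bounds.1 hmem
  rw [h.countP_eq, countP_le_range']
  omega

lemma rigidity {m : ℕ} {s t : List ℕ} (hs : IsP m s) (ht : IsP m t)
    (hiso : ∀ i j : ℕ, i < m → j < m → (s.getD i 0 < s.getD j 0 ↔ t.getD i 0 < t.getD j 0)) :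
    s = t := by
  have hls : s.length = m := hs.length
  have hlt : t.length = m := ht.length
  apply List.ext_getElem (by omega)
  intro i hi1 hi2
  have hi : i < m := by omega
  have h1 : s.getD i 0 = s.countP (fun x => decide (x ≤ s.getD i 0)) := perm_val_eq hs hi
  have h2 : t.getD i 0 = t.countP (fun x => decide (x ≤ t.getD i 0)) := perm_val_eq ht hi
  have h3 : s.countP (fun x => decide (x ≤ s.getD i 0)) = t.countP (fun x => decide (x ≤ t.getD i 0)) := by
    apply countP_congr_idx s t (by omega)
    intro j hj
    have hj' : j < m := by omega
    have := hiso i j hi hj'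
    have := hiso j i hj' hi
    simp only [decide_eq_decide]
    omega
  rw [← List.getD_eq_getElem s 0 (by omega), ← List.getD_eq_getElem t 0 (by omega), h1, h2, h3]
end Smith

namespace Smith

/-! ### shadow characterization -/

lemma Dv_length {s : List ℕ} {v : ℕ} (hv : v ∈ s) : (Dv s v).length = s.length - 1 := by
  unfold Dv
  rw [List.length_map, List.length_erase_of_mem hv]

lemma getD_map_pcol {l : List ℕ} {v i : ℕ} (hi : i < l.length) :
    (l.map (pcol v)).getD i 0 = pcol v (l.getD i 0) := by
  rw [List.getD_eq_getElem _ _ (by simpa using hi), List.getD_eq_getElem _ _ hi]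
  simp

lemma contains_Dv {s : List ℕ} (hP : IsPermList s) {v : ℕ} (hv : v ∈ s)
    (ρ : Permu) (hρ : ρ.val = Dv s v) : Contains ρ ⟨s, hP⟩ := by
  have hnd : s.Nodup := IsP.nodup hP.2
  refine ⟨s.erase v, List.erase_sublist (a := v) (l := s), ?_, ?_⟩
  · rw [hρ, Dv_length hv, List.length_erase_of_mem hv]
  · intro i j hi hj
    rw [hρ]
    unfold Dv
    rw [getD_map_pcol hi, getD_map_pcol hj]
    have hmi : (s.erase v).getD i 0 ∈ s.erase v := by
      rw [List.getD_eq_getElem _ _ hi]; exact List.getElem_mem _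
    have hmj : (s.erase v).getD j 0 ∈ s.erase v := by
      rw [List.getD_eq_getElem _ _ hj]; exact List.getElem_mem _
    rw [pcol_lt_iff ((hnd.mem_erase_iff.1 hmi).1) ((hnd.mem_erase_iff.1 hmj).1)]

lemma sub_erase : ∀ {u s : List ℕ}, u.Sublist s → s.Nodup → u.length + 1 = s.length →
    ∃ v ∈ s, u = s.erase v := by
  intro u s hu
  induction hu with
  | slnil => intro _ h; simp at h
  | @cons l₁ l₂ a h ih =>
    intro hnd hlen
    have : l₁ = l₂ := h.eq_of_length (by simpa using hlen)
    subst this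
    exact ⟨a, by simp, by rw [List.erase_cons_head]⟩
  | @cons_cons l₁ l₂ a h ih =>
    intro hnd hlen
    obtain ⟨v, hv, hvu⟩ := ih (List.nodup_cons.1 hnd).2 (by simpa using hlen)
    have hva : v ≠ a := by
      rintro rfl; exact (List.nodup_cons.1 hnd).1 hv
    refine ⟨v, List.mem_cons_of_mem _ hv, ?_⟩
    rw [List.erase_cons, if_neg (by simpa using fun h => hva h.symm), hvu]

lemma shadow_mem {s : List ℕ} (hP : IsPermList s) (ρ : Permu) :
    ρ ∈ shadow ⟨s, hP⟩ ↔ ∃ v ∈ s, ρ.val = Dv s v := by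
  have hnd : s.Nodup := IsP.nodup hP.2
  have hval : (⟨s, hP⟩ : Permu).val = s := rfl
  constructor
  · rintro ⟨hlen, u, hsub, hulen, hiso⟩
    rw [hval] at hlen hsub
    obtain ⟨v, hv, huv⟩ := sub_erase hsub hnd (by omega)
    refine ⟨v, hv, ?_⟩
    have hel : (s.erase v).length = s.length - 1 := List.length_erase_of_mem hv
    have hDvP : IsP (s.length - 1) (Dv s v) := Dv_isP hP.2 hv
    have hρP : IsP (s.length - 1) ρ.val := by
      have := ρ.2.2
      rwa [show ρ.val.length = s.length - 1 by omega] at this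
    apply rigidity hρP hDvP
    intro i j hi hj
    have hilen : i < u.length := by rw [huv, hel]; omega
    have hjlen : j < u.length := by rw [huv, hel]; omega
    rw [← hiso i j hilen hjlen, huv]
    unfold Dv
    rw [getD_map_pcol (by rw [hel]; omega), getD_map_pcol (by rw [hel]; omega)]
    have hmi : (s.erase v).getD i 0 ∈ s.erase v := by
      rw [List.getD_eq_getElem _ _ (by rw [hel]; omega)]; exact List.getElem_mem _
    have hmj : (s.erase v).getD j 0 ∈ s.erase v := by
      rw [List.getD_eq_getElem _ _ (by rw [hel]; omega)]; exact List.getElem_mem _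
    exact (pcol_lt_iff ((hnd.mem_erase_iff.1 hmi).1) ((hnd.mem_erase_iff.1 hmj).1)).symm
  · rintro ⟨v, hv, hρv⟩
    have hs1 : 1 ≤ s.length := by
      cases s with
      | nil => exact absurd rfl hP.1
      | cons a t => simp
    constructor
    · show ρ.val.length + 1 = s.length
      rw [hρv, Dv_length hv]; omega
    · exact contains_Dv hP hv ρ hρv

end Smith

namespace Smith

/-! ### commuting deletions -/

lemma Dv_comm {s : List ℕ} (hnd : s.Nodup) {a b : ℕ} (hab : a ≠ b) :
    Dv (Dv s a) (pcol a b) = Dv (Dv s b) (pcol b a) := by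
  unfold Dv
  have h1 : ((s.erase a).map (pcol a)).erase (pcol a b) = ((s.erase a).erase b).map (pcol a) :=
    map_erase_of_unique (fun x hx hfx =>
      pcol_inj ((hnd.mem_erase_iff.1 hx).1) (fun h => hab h.symm) hfx)
  have h2 : ((s.erase b).map (pcol b)).erase (pcol b a) = ((s.erase b).erase a).map (pcol b) :=
    map_erase_of_unique (fun x hx hfx =>
      pcol_inj ((hnd.mem_erase_iff.1 hx).1) hab hfx)
  rw [h1, h2, List.map_map, List.map_map, List.erase_comm]
  apply List.map_congr_left
  intro x hx
  have hxa : x ≠ a := ((hnd.erase b).mem_erase_iff.1 hx).1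
  have hxb : x ≠ b := (hnd.mem_erase_iff.1 (List.mem_of_mem_erase hx)).1
  exact pcol_comm hab hxa hxb

lemma mem_Dv_iff {s : List ℕ} (hnd : s.Nodup) {p w : ℕ} :
    w ∈ Dv s p ↔ ∃ v ∈ s, v ≠ p ∧ w = pcol p v := by
  unfold Dv
  rw [List.mem_map]
  constructor
  · rintro ⟨v, hv, rfl⟩
    exact ⟨v, List.mem_of_mem_erase hv, (hnd.mem_erase_iff.1 hv).1, rfl⟩
  · rintro ⟨v, hv, hvp, rfl⟩
    exact ⟨v, hnd.mem_erase_iff.2 ⟨hvp, hv⟩, rfl⟩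

/-- master lemma: description of the deletion set of `Dv s (pick s)`. -/
lemma Dset_desc (pick : List ℕ → ℕ)
    (hm : ∀ m t, 1 ≤ m → IsP m t → pick t ∈ t)
    (hc : ∀ m t v, IsP m t → v ∈ t → v ≠ pick t → pick (Dv t v) = pcol v (pick t))
    {n : ℕ} {s : List ℕ} (hn : 2 ≤ n) (hs : IsP n s) :
    ∀ ρ, (∃ w ∈ Dv s (pick s), ρ = Dv (Dv s (pick s)) w) ↔
      (∃ δ, (∃ v ∈ s, δ = Dv s v) ∧ ρ = Dv δ (pick δ)) := by
  have hnd : s.Nodup := hs.nodup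
  have hp : pick s ∈ s := hm n s (by omega) hs
  intro ρ
  constructor
  · rintro ⟨w, hw, rfl⟩
    obtain ⟨v, hv, hvp, rfl⟩ := (mem_Dv_iff hnd).1 hw
    refine ⟨Dv s v, ⟨v, hv, rfl⟩, ?_⟩
    rw [hc n s v hs hv hvp]
    exact Dv_comm hnd (fun h => hvp h.symm)
  · rintro ⟨δ, ⟨v, hv, hδ⟩, rfl⟩
    subst hδ
    by_cases hvp : v = pick s
    · have hδ : IsP (n-1) (Dv s v) := Dv_isP hs hv
      rw [← hvp]
      exact ⟨pick (Dv s v), hm (n-1) _ (by omega) hδ, rfl⟩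
    · refine ⟨pcol (pick s) v, (mem_Dv_iff hnd).2 ⟨v, hv, hvp, rfl⟩, ?_⟩
      rw [hc n s v hs hv hvp]
      exact (Dv_comm hnd (fun h => hvp h.symm)).symm

lemma DsetEq_lift (pick : List ℕ → ℕ)
    (hm : ∀ m t, 1 ≤ m → IsP m t → pick t ∈ t)
    (hc : ∀ m t v, IsP m t → v ∈ t → v ≠ pick t → pick (Dv t v) = pcol v (pick t))
    {n : ℕ} {s t : List ℕ} (hn : 2 ≤ n) (hs : IsP n s) (ht : IsP n t)
    (h : DsetEq s t) : DsetEq (Dv s (pick s)) (Dv t (pick t)) := by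
  intro ρ
  rw [Dset_desc pick hm hc hn hs ρ, Dset_desc pick hm hc hn ht ρ]
  constructor
  · rintro ⟨δ, hδ, rfl⟩
    exact ⟨δ, (h δ).1 hδ, rfl⟩
  · rintro ⟨δ, hδ, rfl⟩
    exact ⟨δ, (h δ).2 hδ, rfl⟩

/-! ### the four picks -/

lemma pick1_mem : ∀ m t, 1 ≤ m → IsP m t → (fun _ : List ℕ => 1) t ∈ t := by
  intro m t hm ht
  exact ht.mem_bounds.2 ⟨le_refl 1, hm⟩

lemma pick1_comm : ∀ m t v, IsP m t → v ∈ t → v ≠ (fun _ : List ℕ => 1) t →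
    (fun _ : List ℕ => 1) (Dv t v) = pcol v ((fun _ : List ℕ => 1) t) := by
  intro m t v ht hv hne
  have : 1 ≤ v := (ht.mem_bounds.1 hv).1
  simp only []
  unfold pcol
  simp only at hne
  rw [if_neg (by omega)]

lemma pickM_mem : ∀ m t, 1 ≤ m → IsP m t → List.length t ∈ t := by
  intro m t hm ht
  rw [ht.length]
  exact ht.mem_bounds.2 ⟨hm, le_refl m⟩

lemma pickM_comm : ∀ m t v, IsP m t → v ∈ t → v ≠ List.length t →
    List.length (Dv t v) = pcol v (List.length t) := by
  intro m t v ht hv hne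
  have hb := ht.mem_bounds.1 hv
  rw [Dv_length hv, ht.length] at *
  unfold pcol
  rw [if_pos (by omega)]

lemma pickH_mem : ∀ m t, 1 ≤ m → IsP m t → (fun l : List ℕ => l.headD 0) t ∈ t := by
  intro m t hm ht
  apply headD_mem
  intro h
  rw [h] at ht
  have := ht.length
  simp at this
  omega

lemma pickH_comm : ∀ m t v, IsP m t → v ∈ t → v ≠ (fun l : List ℕ => l.headD 0) t →
    (fun l : List ℕ => l.headD 0) (Dv t v) = pcol v ((fun l : List ℕ => l.headD 0) t) := by
  intro m t v ht hv hne
  simp only [] at hne ⊢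
  cases t with
  | nil => simp at hv
  | cons a r =>
    simp only [List.headD_cons] at hne ⊢
    have hvr : v ∈ r := by rcases List.mem_cons.1 hv with h | h; exact absurd h hne; exact h
    have hr : r ≠ [] := by rintro rfl; simp at hvr
    unfold Dv
    rw [List.erase_cons, if_neg (by simpa using fun h => hne h.symm), List.map_cons,
      List.headD_cons]

lemma pickL_mem : ∀ m t, 1 ≤ m → IsP m t → (fun l : List ℕ => l.getLastD 0) t ∈ t := by
  intro m t hm ht
  apply lastD_mem
  intro h
  rw [h] at ht
  have := ht.length
  simp at this
  omega

lemma pickL_comm : ∀ m t v, IsP m t → v ∈ t → v ≠ (fun l : List ℕ => l.getLastD 0) t →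
    (fun l : List ℕ => l.getLastD 0) (Dv t v) = pcol v ((fun l : List ℕ => l.getLastD 0) t) := by
  intro m t v ht hv hne
  simp only [] at hne ⊢
  obtain ⟨h1, h2⟩ := erase_lastD hv hne
  unfold Dv
  rw [map_lastD h2, h1]

end Smith

namespace Smith

/-! ### finite checks -/

def perms2 : List (List ℕ) := [[1, 2], [2, 1]]
def perms3 : List (List ℕ) := [[1, 2, 3], [1, 3, 2], [2, 1, 3], [2, 3, 1], [3, 1, 2], [3, 2, 1]]
def perms4 : List (List ℕ) := [[1, 2, 3, 4], [1, 2, 4, 3], [1, 3, 2, 4], [1, 3, 4, 2], [1, 4, 2, 3], [1, 4, 3, 2], [2, 1, 3, 4], [2, 1, 4, 3], [2, 3, 1, 4], [2, 3, 4, 1], [2, 4, 1, 3], [2, 4, 3, 1], [3, 1, 2, 4], [3, 1, 4, 2], [3, 2, 1, 4], [3, 2, 4, 1], [3, 4, 1, 2], [3, 4, 2, 1], [4, 1, 2, 3], [4, 1, 3, 2], [4, 2, 1, 3], [4, 2, 3, 1], [4, 3, 1, 2], [4, 3, 2, 1]]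
def L3 : List (List ℕ) := [[1,3,2],[2,1,3],[2,3,1],[3,1,2]]

lemma enum2 : ∀ a ∈ List.range 3, ∀ b ∈ List.range 3,
    ([a,b] : List ℕ).Perm (List.range' 1 2) → ([a,b] : List ℕ) ∈ perms2 := by decide

lemma enum3 : ∀ a ∈ List.range 4, ∀ b ∈ List.range 4, ∀ c ∈ List.range 4,
    ([a,b,c] : List ℕ).Perm (List.range' 1 3) → ([a,b,c] : List ℕ) ∈ perms3 := by decide

set_option maxRecDepth 10000 in
lemma enum4 : ∀ a ∈ List.range 5, ∀ b ∈ List.range 5, ∀ c ∈ List.range 5, ∀ d ∈ List.range 5,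
    ([a,b,c,d] : List ℕ).Perm (List.range' 1 4) → ([a,b,c,d] : List ℕ) ∈ perms4 := by decide

lemma key3 : ∀ s ∈ perms3, ∀ t ∈ perms3, DsetEqB s t → s = t ∨ (s ∈ L3 ∧ t ∈ L3) := by decide

set_option maxRecDepth 40000 in
lemma key4 : ∀ s ∈ perms4, ∀ t ∈ perms4, DsetEqB s t →
    s = t ∨ (s = [2,4,1,3] ∧ t = [3,1,4,2]) ∨ (s = [3,1,4,2] ∧ t = [2,4,1,3]) := by decide

lemma pair12 : DsetEqB [1,2] [2,1] := by decide
lemma pairL3 : ∀ s ∈ L3, ∀ t ∈ L3, DsetEqB s t := by decide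
lemma pair2413 : DsetEqB [2,4,1,3] [3,1,4,2] := by decide

set_option maxRecDepth 40000 in
lemma exc1 : ∀ x ∈ List.range 5, ∀ y ∈ List.range 5,
    ¬ DsetEqB (([2,4,1,3] : List ℕ).insertIdx x 5) (([3,1,4,2] : List ℕ).insertIdx y 5) := by
  decide

set_option maxRecDepth 40000 in
lemma exc2 : ∀ x ∈ List.range 5, ∀ y ∈ List.range 5,
    ¬ DsetEqB ((([2,4,1,3] : List ℕ).map (plift 1)).insertIdx x 1)
      ((([3,1,4,2] : List ℕ).map (plift 1)).insertIdx y 1) := by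
  decide

set_option maxRecDepth 40000 in
lemma exc3 : ∀ h ∈ List.range 6, ∀ h' ∈ List.range 6,
    (h :: ([2,4,1,3] : List ℕ).map (plift h)).Perm (List.range' 1 5) →
    (h' :: ([3,1,4,2] : List ℕ).map (plift h')).Perm (List.range' 1 5) →
    ¬ DsetEqB (h :: ([2,4,1,3] : List ℕ).map (plift h))
      (h' :: ([3,1,4,2] : List ℕ).map (plift h')) := by
  decide

set_option maxRecDepth 40000 in
lemma exc4 : ∀ e ∈ List.range 6, ∀ e' ∈ List.range 6,
    (([2,4,1,3] : List ℕ).map (plift e) ++ [e]).Perm (List.range' 1 5) →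
    (([3,1,4,2] : List ℕ).map (plift e') ++ [e']).Perm (List.range' 1 5) →
    ¬ DsetEqB (([2,4,1,3] : List ℕ).map (plift e) ++ [e])
      (([3,1,4,2] : List ℕ).map (plift e') ++ [e']) := by
  decide

lemma DsetEqB_symm {s t : List ℕ} (h : DsetEqB s t) : DsetEqB t s := ⟨h.2, h.1⟩

lemma DsetEq_iff_B {s t : List ℕ} : DsetEq s t ↔ DsetEqB s t := by
  unfold DsetEq DsetEqB Dlist
  constructor
  · intro h
    constructor
    · intro ρ hρ
      obtain ⟨v, hv, hvρ⟩ := List.mem_map.1 hρ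
      rw [List.mem_map]
      obtain ⟨w, hw, hwρ⟩ := (h ρ).1 ⟨v, hv, hvρ.symm⟩
      exact ⟨w, hw, hwρ.symm⟩
    · intro ρ hρ
      obtain ⟨v, hv, hvρ⟩ := List.mem_map.1 hρ
      rw [List.mem_map]
      obtain ⟨w, hw, hwρ⟩ := (h ρ).2 ⟨v, hv, hvρ.symm⟩
      exact ⟨w, hw, hwρ.symm⟩
  · intro h ρ
    constructor
    · rintro ⟨v, hv, rfl⟩
      obtain ⟨w, hw, hwρ⟩ := List.mem_map.1 (h.1 _ (List.mem_map.2 ⟨v, hv, rfl⟩))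
      exact ⟨w, hw, hwρ.symm⟩
    · rintro ⟨v, hv, rfl⟩
      obtain ⟨w, hw, hwρ⟩ := List.mem_map.1 (h.2 _ (List.mem_map.2 ⟨v, hv, rfl⟩))
      exact ⟨w, hw, hwρ.symm⟩

end Smith

namespace Smith

/-! ### the main argument -/

lemma Dv_top {n : ℕ} {s : List ℕ} (hs : IsP n s) : Dv s n = s.erase n := by
  unfold Dv
  apply map_id_of
  intro x hx
  have hxs : x ∈ s := List.mem_of_mem_erase hx
  have hb := hs.mem_bounds.1 hxs
  unfold pcol
  rw [if_neg (by omega)]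

lemma map_plift_Dv {s : List ℕ} (hnd : s.Nodup) (v : ℕ) :
    (Dv s v).map (plift v) = s.erase v := by
  unfold Dv
  rw [List.map_map]
  apply map_id_of
  intro x hx
  exact plift_pcol (hnd.mem_erase_iff.1 hx).1

lemma finalAux {n : ℕ} (hn : 5 ≤ n) {ρ : List ℕ} (hρ : IsP (n-1) ρ) {x y : ℕ}
    {σ τ : List ℕ} (hσ : σ = ρ.insertIdx x n) (hτ : τ = ρ.insertIdx y n)
    (hσP : IsP n σ) (hτP : IsP n τ)
    (hx : x ≤ n - 1) (hy : y ≤ n - 1) (hxy : x < y)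
    (E2 : Dv σ 1 = Dv τ 1)
    (E3 : Dv σ (σ.headD 0) = Dv τ (τ.headD 0))
    (E4 : Dv σ (σ.getLastD 0) = Dv τ (τ.getLastD 0)) : False := by
  have hρlen : ρ.length = n - 1 := hρ.length
  have hρne : ρ ≠ [] := by intro h; rw [h] at hρlen; simp at hρlen; omega
  have hρnd : ρ.Nodup := hρ.nodup
  -- Step 1 : x = 0
  have hx0 : x = 0 := by
    by_contra hx0
    obtain ⟨x', rfl⟩ : ∃ x', x = x' + 1 := ⟨x - 1, by omega⟩
    obtain ⟨y', rfl⟩ : ∃ y', y = y' + 1 := ⟨y - 1, by omega⟩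
    obtain ⟨h, ρ', rfl⟩ : ∃ h ρ', ρ = h :: ρ' := by
      cases ρ with
      | nil => exact absurd rfl hρne
      | cons h ρ' => exact ⟨h, ρ', rfl⟩
    have hmem : h ∈ h :: ρ' := by simp
    have hhb := hρ.mem_bounds.1 hmem
    have hσ' : σ = h :: ρ'.insertIdx x' n := by rw [hσ, List.insertIdx_succ_cons]
    have hτ' : τ = h :: ρ'.insertIdx y' n := by rw [hτ, List.insertIdx_succ_cons]
    have hσh : σ.headD 0 = h := by rw [hσ']; rfl
    have hτh : τ.headD 0 = h := by rw [hτ']; rfl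
    have hDσ : Dv σ h = (ρ'.map (pcol h)).insertIdx x' (n-1) := by
      unfold Dv
      rw [hσ', List.erase_cons_head, map_insertIdx, pcol_top (by omega)]
    have hDτ : Dv τ h = (ρ'.map (pcol h)).insertIdx y' (n-1) := by
      unfold Dv
      rw [hτ', List.erase_cons_head, map_insertIdx, pcol_top (by omega)]
    rw [hσh, hτh, hDσ, hDτ] at E3
    have hnotin : (n-1) ∉ ρ'.map (pcol h) := by
      intro hmem'
      obtain ⟨z, hz, hzp⟩ := List.mem_map.1 hmem'
      have hzρ : z ∈ h :: ρ' := List.mem_cons_of_mem _ hz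
      have hzb := hρ.mem_bounds.1 hzρ
      have hzh : z ≠ h := by
        rintro rfl
        exact (List.nodup_cons.1 hρnd).1 hz
      exact pcol_ne_top (by omega) (by omega) hzh hzp
    have hlρ' : ρ'.length = n - 2 := by
      have : (h :: ρ').length = n - 1 := hρlen
      simp at this
      omega
    have := insertIdx_inj hnotin
      (by rw [List.length_map, hlρ']; omega)
      (by rw [List.length_map, hlρ']; omega) E3
    omega
  -- Step 2 : y = n - 1
  have hyL : y = n - 1 := by
    by_contra hy'
    have hyy : y < n - 1 := by omega
    set e := ρ.getLastD 0 with he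
    have heρ : e ∈ ρ := lastD_mem hρne
    have heb := hρ.mem_bounds.1 heρ
    have hσe : σ.getLastD 0 = e := by
      rw [hσ, lastD_insertIdx (by omega)]
    have hτe : τ.getLastD 0 = e := by
      rw [hτ, lastD_insertIdx (by omega)]
    have hσne : σ ≠ [] := by
      intro h; rw [h] at hσP; have := hσP.length; simp at this; omega
    have hτne : τ ≠ [] := by
      intro h; rw [h] at hτP; have := hτP.length; simp at this; omega
    have hDσ : Dv σ e = (ρ.dropLast.map (pcol e)).insertIdx x (n-1) := by
      unfold Dv
      rw [show σ.erase e = σ.dropLast by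
          rw [← hσe]; exact erase_of_lastD hσP.nodup hσne,
        hσ, dropLast_insertIdx (by omega), map_insertIdx, pcol_top (by omega)]
    have hDτ : Dv τ e = (ρ.dropLast.map (pcol e)).insertIdx y (n-1) := by
      unfold Dv
      rw [show τ.erase e = τ.dropLast by
          rw [← hτe]; exact erase_of_lastD hτP.nodup hτne,
        hτ, dropLast_insertIdx (by omega), map_insertIdx, pcol_top (by omega)]
    rw [hσe, hτe, hDσ, hDτ] at E4
    have hsplit : ρ.dropLast ++ [e] = ρ := dropLast_append_lastD hρne
    have hnodis : ∀ z ∈ ρ.dropLast, z ∉ [e] := by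
      have := hρnd
      rw [← hsplit] at this
      exact fun z hz hz' => (List.disjoint_of_nodup_append this) hz hz'
    have hnotin : (n-1) ∉ ρ.dropLast.map (pcol e) := by
      intro hmem'
      obtain ⟨z, hz, hzp⟩ := List.mem_map.1 hmem'
      have hzρ : z ∈ ρ := by rw [← hsplit]; exact List.mem_append_left _ hz
      have hzb := hρ.mem_bounds.1 hzρ
      have hze : z ≠ e := by
        intro h; exact hnodis z hz (by simp [h])
      exact pcol_ne_top (by omega) (by omega) hze hzp
    have hldl : ρ.dropLast.length = n - 2 := by
      rw [List.length_dropLast, hρlen]; omega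
    have := insertIdx_inj hnotin
      (by rw [List.length_map, hldl]; omega)
      (by rw [List.length_map, hldl]; omega) E4
    omega
  -- Step 3 : contradiction via E2
  subst hx0
  have hσ0 : σ = n :: ρ := by rw [hσ, List.insertIdx_zero]
  have hτ0 : τ = ρ ++ [n] := by
    rw [hτ, hyL, ← hρlen, insertIdx_length_self]
  have h1ρ : (1:ℕ) ∈ ρ := hρ.mem_bounds.2 ⟨le_refl 1, by omega⟩
  have hDσ1 : Dv σ 1 = (n-1) :: (ρ.erase 1).map (pcol 1) := by
    unfold Dv
    rw [hσ0, List.erase_cons, if_neg (by simp; omega), List.map_cons, pcol_top (by omega)]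
  have hDτ1 : Dv τ 1 = (ρ.erase 1).map (pcol 1) ++ [n-1] := by
    unfold Dv
    rw [hτ0, List.erase_append_left _ h1ρ, List.map_append]
    simp [pcol_top (show (1:ℕ) < n by omega)]
  rw [hDσ1, hDτ1] at E2
  have hall := cons_eq_append_singleton E2
  have hγP : IsP (n-2) ((ρ.erase 1).map (pcol 1)) := by
    have := Dv_isP hρ h1ρ
    rwa [show n - 1 - 1 = n - 2 by omega] at this
  have h1γ : (1:ℕ) ∈ (ρ.erase 1).map (pcol 1) := hγP.mem_bounds.2 ⟨le_refl 1, by omega⟩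
  have := hall 1 h1γ
  omega

lemma main_eq {n : ℕ} {s t : List ℕ} (hn5 : 5 ≤ n) (hs : IsP n s) (ht : IsP n t)
    (E1 : s.erase n = t.erase n)
    (E2 : Dv s 1 = Dv t 1)
    (E3 : Dv s (s.headD 0) = Dv t (t.headD 0))
    (E4 : Dv s (s.getLastD 0) = Dv t (t.getLastD 0)) : s = t := by
  have hns : n ∈ s := hs.mem_bounds.2 ⟨by omega, le_refl n⟩
  have hnt : n ∈ t := ht.mem_bounds.2 ⟨by omega, le_refl n⟩
  have hρP : IsP (n-1) (s.erase n) := by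
    have := Dv_isP hs hns
    rwa [Dv_top hs] at this
  have hxs : s = (s.erase n).insertIdx (s.idxOf n) n := (insertIdx_erase_indexOf hns).symm
  have hyt : t = (s.erase n).insertIdx (t.idxOf n) n := by
    rw [E1]; exact (insertIdx_erase_indexOf hnt).symm
  have hxb : s.idxOf n < n := by
    have := List.idxOf_lt_length_iff.2 hns
    rwa [hs.length] at this
  have hyb : t.idxOf n < n := by
    have := List.idxOf_lt_length_iff.2 hnt
    rwa [ht.length] at this
  rcases Nat.lt_trichotomy (s.idxOf n) (t.idxOf n) with h | h | h
  · exact absurd (finalAux hn5 hρP hxs hyt hs ht (by omega) (by omega) h E2 E3 E4) not_false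
  · rw [hxs, hyt, h]
  · exact absurd (finalAux hn5 hρP hyt hxs ht hs (by omega) (by omega) h
      E2.symm E3.symm E4.symm) not_false

end Smith

namespace Smith

/-! ### length-5 exceptional cases -/

lemma exc1' {s t : List ℕ} (hs : IsP 5 s) (ht : IsP 5 t)
    (hA : s.erase 5 = [2,4,1,3]) (hB : t.erase 5 = [3,1,4,2]) (h : DsetEqB s t) : False := by
  have h5s : (5:ℕ) ∈ s := hs.mem_bounds.2 (by omega)
  have h5t : (5:ℕ) ∈ t := ht.mem_bounds.2 (by omega)
  have hsx : s = ([2,4,1,3] : List ℕ).insertIdx (s.idxOf 5) 5 := by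
    rw [← hA]; exact (insertIdx_erase_indexOf h5s).symm
  have hty : t = ([3,1,4,2] : List ℕ).insertIdx (t.idxOf 5) 5 := by
    rw [← hB]; exact (insertIdx_erase_indexOf h5t).symm
  have hxb : s.idxOf 5 < 5 := by
    have := List.idxOf_lt_length_iff.2 h5s; rwa [hs.length] at this
  have hyb : t.idxOf 5 < 5 := by
    have := List.idxOf_lt_length_iff.2 h5t; rwa [ht.length] at this
  rw [hsx, hty] at h
  exact exc1 _ (List.mem_range.2 hxb) _ (List.mem_range.2 hyb) h

lemma exc2' {s t : List ℕ} (hs : IsP 5 s) (ht : IsP 5 t)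
    (hA : Dv s 1 = [2,4,1,3]) (hB : Dv t 1 = [3,1,4,2]) (h : DsetEqB s t) : False := by
  have h1s : (1:ℕ) ∈ s := hs.mem_bounds.2 (by omega)
  have h1t : (1:ℕ) ∈ t := ht.mem_bounds.2 (by omega)
  have hes : s.erase 1 = ([2,4,1,3] : List ℕ).map (plift 1) := by
    rw [← hA, map_plift_Dv hs.nodup]
  have het : t.erase 1 = ([3,1,4,2] : List ℕ).map (plift 1) := by
    rw [← hB, map_plift_Dv ht.nodup]
  have hsx : s = (([2,4,1,3] : List ℕ).map (plift 1)).insertIdx (s.idxOf 1) 1 := by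
    rw [← hes]; exact (insertIdx_erase_indexOf h1s).symm
  have hty : t = (([3,1,4,2] : List ℕ).map (plift 1)).insertIdx (t.idxOf 1) 1 := by
    rw [← het]; exact (insertIdx_erase_indexOf h1t).symm
  have hxb : s.idxOf 1 < 5 := by
    have := List.idxOf_lt_length_iff.2 h1s; rwa [hs.length] at this
  have hyb : t.idxOf 1 < 5 := by
    have := List.idxOf_lt_length_iff.2 h1t; rwa [ht.length] at this
  rw [hsx, hty] at h
  exact exc2 _ (List.mem_range.2 hxb) _ (List.mem_range.2 hyb) h

lemma head_decomp {s : List ℕ} {n : ℕ} (hs : IsP n s) (hn : 1 ≤ n) {A : List ℕ}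
    (hA : Dv s (s.headD 0) = A) : s = s.headD 0 :: A.map (plift (s.headD 0)) := by
  cases s with
  | nil => have := hs.length; simp at this; omega
  | cons a r =>
    simp only [List.headD_cons] at hA ⊢
    have hr : r = A.map (plift a) := by
      have := congrArg (List.map (plift a)) hA
      rwa [map_plift_Dv hs.nodup, List.erase_cons_head] at this
    rw [← hr]

lemma exc3' {s t : List ℕ} (hs : IsP 5 s) (ht : IsP 5 t)
    (hA : Dv s (s.headD 0) = [2,4,1,3]) (hB : Dv t (t.headD 0) = [3,1,4,2])
    (h : DsetEqB s t) : False := by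
  have hds := head_decomp hs (by omega) hA
  have hdt := head_decomp ht (by omega) hB
  have hhs : s.headD 0 ∈ s := headD_mem (by intro hh; rw [hh] at hs; have := hs.length; simp at this)
  have hht : t.headD 0 ∈ t := headD_mem (by intro hh; rw [hh] at ht; have := ht.length; simp at this)
  have hbs : s.headD 0 < 6 := by have := hs.mem_bounds.1 hhs; omega
  have hbt : t.headD 0 < 6 := by have := ht.mem_bounds.1 hht; omega
  have hsP : (s.headD 0 :: ([2,4,1,3] : List ℕ).map (plift (s.headD 0))).Perm (List.range' 1 5) := by
    rw [← hds]; exact hs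
  have htP : (t.headD 0 :: ([3,1,4,2] : List ℕ).map (plift (t.headD 0))).Perm (List.range' 1 5) := by
    rw [← hdt]; exact ht
  rw [hds, hdt] at h
  exact exc3 _ (List.mem_range.2 hbs) _ (List.mem_range.2 hbt) hsP htP h

lemma last_decomp {s : List ℕ} {n : ℕ} (hs : IsP n s) (hn : 1 ≤ n) {A : List ℕ}
    (hA : Dv s (s.getLastD 0) = A) : s = A.map (plift (s.getLastD 0)) ++ [s.getLastD 0] := by
  have hne : s ≠ [] := by intro hh; rw [hh] at hs; have := hs.length; simp at this; omega
  have hdl : s.dropLast = A.map (plift (s.getLastD 0)) := by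
    have := congrArg (List.map (plift (s.getLastD 0))) hA
    rwa [map_plift_Dv hs.nodup, erase_of_lastD hs.nodup hne] at this
  rw [← hdl, dropLast_append_lastD hne]

lemma exc4' {s t : List ℕ} (hs : IsP 5 s) (ht : IsP 5 t)
    (hA : Dv s (s.getLastD 0) = [2,4,1,3]) (hB : Dv t (t.getLastD 0) = [3,1,4,2])
    (h : DsetEqB s t) : False := by
  have hds := last_decomp hs (by omega) hA
  have hdt := last_decomp ht (by omega) hB
  have hhs : s.getLastD 0 ∈ s := lastD_mem (by intro hh; rw [hh] at hs; have := hs.length; simp at this)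
  have hht : t.getLastD 0 ∈ t := lastD_mem (by intro hh; rw [hh] at ht; have := ht.length; simp at this)
  have hbs : s.getLastD 0 < 6 := by have := hs.mem_bounds.1 hhs; omega
  have hbt : t.getLastD 0 < 6 := by have := ht.mem_bounds.1 hht; omega
  have hsP : (([2,4,1,3] : List ℕ).map (plift (s.getLastD 0)) ++ [s.getLastD 0]).Perm (List.range' 1 5) := by
    rw [← hds]; exact hs
  have htP : (([3,1,4,2] : List ℕ).map (plift (t.getLastD 0)) ++ [t.getLastD 0]).Perm (List.range' 1 5) := by
    rw [← hdt]; exact ht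
  rw [hds, hdt] at h
  exact exc4 _ (List.mem_range.2 hbs) _ (List.mem_range.2 hbt) hsP htP h

/-! ### enumeration at small lengths -/

lemma mem_perms4 {s : List ℕ} (h : IsP 4 s) : s ∈ perms4 := by
  have hlen : s.length = 4 := h.length
  obtain ⟨a, b, c, d, rfl⟩ : ∃ a b c d, s = [a,b,c,d] := by
    cases s with
    | nil => simp at hlen
    | cons a s1 =>
      cases s1 with
      | nil => simp at hlen
      | cons b s2 =>
        cases s2 with
        | nil => simp at hlen
        | cons c s3 =>
          cases s3 with
          | nil => simp at hlen
          | cons d s4 =>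
            cases s4 with
            | nil => exact ⟨a, b, c, d, rfl⟩
            | cons e s5 => simp at hlen
  have hb : ∀ z ∈ ([a,b,c,d] : List ℕ), z < 5 := fun z hz => by
    have := h.mem_bounds.1 hz; omega
  exact enum4 a (List.mem_range.2 (hb a (by simp))) b (List.mem_range.2 (hb b (by simp)))
    c (List.mem_range.2 (hb c (by simp))) d (List.mem_range.2 (hb d (by simp))) h

lemma mem_perms3 {s : List ℕ} (h : IsP 3 s) : s ∈ perms3 := by
  have hlen : s.length = 3 := h.length
  obtain ⟨a, b, c, rfl⟩ : ∃ a b c, s = [a,b,c] := by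
    cases s with
    | nil => simp at hlen
    | cons a s1 =>
      cases s1 with
      | nil => simp at hlen
      | cons b s2 =>
        cases s2 with
        | nil => simp at hlen
        | cons c s3 =>
          cases s3 with
          | nil => exact ⟨a, b, c, rfl⟩
          | cons d s4 => simp at hlen
  have hb : ∀ z ∈ ([a,b,c] : List ℕ), z < 4 := fun z hz => by
    have := h.mem_bounds.1 hz; omega
  exact enum3 a (List.mem_range.2 (hb a (by simp))) b (List.mem_range.2 (hb b (by simp)))
    c (List.mem_range.2 (hb c (by simp))) h

lemma mem_perms2 {s : List ℕ} (h : IsP 2 s) : s ∈ perms2 := by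
  have hlen : s.length = 2 := h.length
  obtain ⟨a, b, rfl⟩ : ∃ a b, s = [a,b] := by
    cases s with
    | nil => simp at hlen
    | cons a s1 =>
      cases s1 with
      | nil => simp at hlen
      | cons b s2 =>
        cases s2 with
        | nil => exact ⟨a, b, rfl⟩
        | cons c s3 => simp at hlen
  have hb : ∀ z ∈ ([a,b] : List ℕ), z < 3 := fun z hz => by
    have := h.mem_bounds.1 hz; omega
  exact enum2 a (List.mem_range.2 (hb a (by simp))) b (List.mem_range.2 (hb b (by simp))) h

/-! ### the reconstruction theorem -/

def Cl (n : ℕ) (s t : List ℕ) : Prop :=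
  s = t ∨ (n = 4 ∧ ((s = [2,4,1,3] ∧ t = [3,1,4,2]) ∨ (s = [3,1,4,2] ∧ t = [2,4,1,3])))

theorem reconstruct : ∀ n, 4 ≤ n → ∀ s t : List ℕ, IsP n s → IsP n t → DsetEq s t → Cl n s t := by
  intro n hn
  induction n, hn using Nat.le_induction with
  | base =>
    intro s t hs ht hd
    rcases key4 s (mem_perms4 hs) t (mem_perms4 ht) (DsetEq_iff_B.1 hd) with h | h | h
    · exact Or.inl h
    · exact Or.inr ⟨rfl, Or.inl h⟩
    · exact Or.inr ⟨rfl, Or.inr h⟩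
  | succ n hn ih =>
    intro s t hs ht hd
    left
    have h2 : 2 ≤ n + 1 := by omega
    have hdB : DsetEqB s t := DsetEq_iff_B.1 hd
    -- E1 : delete the maximum
    have R1 := DsetEq_lift List.length pickM_mem pickM_comm h2 hs ht hd
    rw [hs.length, ht.length, Dv_top hs, Dv_top ht] at R1
    have c1 : Cl n (s.erase (n+1)) (t.erase (n+1)) := by
      apply ih _ _ _ _ R1 <;>
      · first
        | (have := Dv_isP hs (hs.mem_bounds.2 (by omega : 1 ≤ n+1 ∧ n+1 ≤ n+1))
           rwa [Dv_top hs, Nat.add_sub_cancel] at this)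
        | (have := Dv_isP ht (ht.mem_bounds.2 (by omega : 1 ≤ n+1 ∧ n+1 ≤ n+1))
           rwa [Dv_top ht, Nat.add_sub_cancel] at this)
    rcases c1 with E1 | ⟨hn4, hp⟩
    · -- E2 : delete the minimum
      have R2 := DsetEq_lift (fun _ => 1) pick1_mem pick1_comm h2 hs ht hd
      have c2 : Cl n (Dv s 1) (Dv t 1) := by
        apply ih _ _ _ _ R2 <;>
        · first
          | (have := Dv_isP hs (hs.mem_bounds.2 (by omega : 1 ≤ 1 ∧ 1 ≤ n+1))
             rwa [Nat.add_sub_cancel] at this)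
          | (have := Dv_isP ht (ht.mem_bounds.2 (by omega : 1 ≤ 1 ∧ 1 ≤ n+1))
             rwa [Nat.add_sub_cancel] at this)
      rcases c2 with E2 | ⟨hn4, hp⟩
      · -- E3 : delete the first entry
        have R3 := DsetEq_lift (fun l => l.headD 0) pickH_mem pickH_comm h2 hs ht hd
        have c3 : Cl n (Dv s (s.headD 0)) (Dv t (t.headD 0)) := by
          apply ih _ _ _ _ R3 <;>
          · first
            | (have := Dv_isP hs (pickH_mem (n+1) s (by omega) hs)
               rwa [Nat.add_sub_cancel] at this)
            | (have := Dv_isP ht (pickH_mem (n+1) t (by omega) ht)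
               rwa [Nat.add_sub_cancel] at this)
        rcases c3 with E3 | ⟨hn4, hp⟩
        · -- E4 : delete the last entry
          have R4 := DsetEq_lift (fun l => l.getLastD 0) pickL_mem pickL_comm h2 hs ht hd
          have c4 : Cl n (Dv s (s.getLastD 0)) (Dv t (t.getLastD 0)) := by
            apply ih _ _ _ _ R4 <;>
            · first
              | (have := Dv_isP hs (pickL_mem (n+1) s (by omega) hs)
                 rwa [Nat.add_sub_cancel] at this)
              | (have := Dv_isP ht (pickL_mem (n+1) t (by omega) ht)
                 rwa [Nat.add_sub_cancel] at this)
          rcases c4 with E4 | ⟨hn4, hp⟩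
          · exact main_eq (by omega) hs ht E1 E2 E3 E4
          · subst hn4
            rcases hp with ⟨hA, hB⟩ | ⟨hA, hB⟩
            · exact absurd (exc4' hs ht hA hB hdB) not_false
            · exact absurd (exc4' ht hs hB hA (DsetEqB_symm hdB)) not_false
        · subst hn4
          rcases hp with ⟨hA, hB⟩ | ⟨hA, hB⟩
          · exact absurd (exc3' hs ht hA hB hdB) not_false
          · exact absurd (exc3' ht hs hB hA (DsetEqB_symm hdB)) not_false
      · subst hn4
        rcases hp with ⟨hA, hB⟩ | ⟨hA, hB⟩
        · exact absurd (exc2' hs ht hA hB hdB) not_false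
        · exact absurd (exc2' ht hs hB hA (DsetEqB_symm hdB)) not_false
    · subst hn4
      rcases hp with ⟨hA, hB⟩ | ⟨hA, hB⟩
      · exact absurd (exc1' hs ht hA hB hdB) not_false
      · exact absurd (exc1' ht hs hB hA (DsetEqB_symm hdB)) not_false

end Smith

namespace Smith

/-! ### top-level translation -/

lemma isPermList_Dv {s : List ℕ} {v : ℕ} (h : IsPermList s) (hv : v ∈ s)
    (h2 : 2 ≤ s.length) : IsPermList (Dv s v) := by
  have hlen : (Dv s v).length = s.length - 1 := Dv_length hv
  constructor
  · intro hnil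
    rw [hnil] at hlen
    simp at hlen
    omega
  · have := Dv_isP h.2 hv
    rwa [← hlen] at this

lemma DsetEq_of_shadow_eq {σ τ : Permu} (h2σ : 2 ≤ σ.val.length) (h2τ : 2 ≤ τ.val.length)
    (h : shadow σ = shadow τ) : DsetEq σ.val τ.val := by
  intro ρl
  constructor
  · rintro ⟨v, hv, rfl⟩
    have P : IsPermList (Dv σ.val v) := isPermList_Dv σ.2 hv h2σ
    have hm : (⟨Dv σ.val v, P⟩ : Permu) ∈ shadow σ := (shadow_mem σ.2 _).2 ⟨v, hv, rfl⟩
    rw [h] at hm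
    exact (shadow_mem τ.2 _).1 hm
  · rintro ⟨v, hv, rfl⟩
    have P : IsPermList (Dv τ.val v) := isPermList_Dv τ.2 hv h2τ
    have hm : (⟨Dv τ.val v, P⟩ : Permu) ∈ shadow τ := (shadow_mem τ.2 _).2 ⟨v, hv, rfl⟩
    rw [← h] at hm
    exact (shadow_mem σ.2 _).1 hm

lemma shadow_eq_of_DsetEq {σ τ : Permu} (h : DsetEq σ.val τ.val) : shadow σ = shadow τ := by
  ext ρ
  rw [shadow_mem σ.2 ρ, shadow_mem τ.2 ρ]
  constructor
  · rintro ⟨v, hv, hveq⟩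
    obtain ⟨w, hw, hweq⟩ := (h ρ.val).1 ⟨v, hv, hveq⟩
    exact ⟨w, hw, hweq⟩
  · rintro ⟨v, hv, hveq⟩
    obtain ⟨w, hw, hweq⟩ := (h ρ.val).2 ⟨v, hv, hveq⟩
    exact ⟨w, hw, hweq⟩

lemma length_pos (σ : Permu) : 1 ≤ σ.val.length := List.length_pos_iff.2 σ.2.1

lemma length_eq_of_shadow_eq {σ τ : Permu} (h2σ : 2 ≤ σ.val.length)
    (h : shadow σ = shadow τ) : σ.val.length = τ.val.length := by
  set m := σ.val.length with hm
  have hmem : m ∈ σ.val := (IsP.mem_bounds σ.2.2).2 ⟨by omega, le_refl m⟩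
  have P : IsPermList (Dv σ.val m) := isPermList_Dv σ.2 hmem h2σ
  have hsh : (⟨Dv σ.val m, P⟩ : Permu) ∈ shadow σ := (shadow_mem σ.2 _).2 ⟨m, hmem, rfl⟩
  rw [h] at hsh
  have hlen : (Dv σ.val m).length + 1 = τ.val.length := hsh.1
  rw [Dv_length hmem] at hlen
  omega

lemma permu_eq {σ : Permu} {l : List ℕ} {hl : IsPermList l} (h : σ.val = l) : σ = p l hl :=
  Subtype.ext h

lemma mem4set {σ : Permu} (h : σ.val ∈ L3) :
    σ ∈ ({p [1,3,2], p [2,1,3], p [2,3,1], p [3,1,2]} : Set Permu) := by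
  simp only [L3, List.mem_cons, List.not_mem_nil, or_false] at h
  rcases h with h | h | h | h
  · exact Set.mem_insert_iff.2 (Or.inl (Subtype.ext h))
  · exact Set.mem_insert_iff.2 (Or.inr (Set.mem_insert_iff.2 (Or.inl (Subtype.ext h))))
  · exact Set.mem_insert_iff.2 (Or.inr (Set.mem_insert_iff.2 (Or.inr
      (Set.mem_insert_iff.2 (Or.inl (Subtype.ext h))))))
  · exact Set.mem_insert_iff.2 (Or.inr (Set.mem_insert_iff.2 (Or.inr
      (Set.mem_insert_iff.2 (Or.inr (Set.mem_singleton_iff.2 (Subtype.ext h)))))))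

end Smith

open Smith in
theorem statement_1' (σ τ : Permu) :
    shadow σ = shadow τ ↔
      (({σ, τ} : Set Permu) = {p [1,2], p [2,1]} ∨
       ({σ, τ} : Set Permu) ⊆ {p [1,3,2], p [2,1,3], p [2,3,1], p [3,1,2]} ∨
       ({σ, τ} : Set Permu) = {p [2,4,1,3], p [3,1,4,2]} ∨
       σ = τ) := by
  constructor
  · intro h
    by_cases h1σ : σ.val.length = 1
    · by_cases h1τ : τ.val.length = 1
      · right; right; right
        apply Subtype.ext
        have hσ : σ.val = [1] := by
          have := σ.2.2; rw [h1σ] at this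
          simpa using this
        have hτ : τ.val = [1] := by
          have := τ.2.2; rw [h1τ] at this
          simpa using this
        rw [hσ, hτ]
      · exfalso
        have h2τ : 2 ≤ τ.val.length := by have := length_pos τ; omega
        have := length_eq_of_shadow_eq h2τ h.symm
        omega
    · have h2σ : 2 ≤ σ.val.length := by have := length_pos σ; omega
      have hlen : σ.val.length = τ.val.length := length_eq_of_shadow_eq h2σ h
      have h2τ : 2 ≤ τ.val.length := by omega
      have hd : DsetEq σ.val τ.val := DsetEq_of_shadow_eq h2σ h2τ h
      have hdB : DsetEqB σ.val τ.val := DsetEq_iff_B.1 hd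
      set m := σ.val.length with hm
      have hsP : IsP m σ.val := σ.2.2
      have htP : IsP m τ.val := by have := τ.2.2; rwa [← hlen] at this
      by_cases hm2 : m = 2
      · rw [hm2] at hsP htP
        have hs2 := mem_perms2 hsP
        have ht2 := mem_perms2 htP
        simp only [perms2, List.mem_cons, List.not_mem_nil, or_false] at hs2 ht2
        rcases hs2 with hs2 | hs2 <;> rcases ht2 with ht2 | ht2
        · exact Or.inr (Or.inr (Or.inr (Subtype.ext (hs2.trans ht2.symm))))
        · left; rw [permu_eq hs2, permu_eq ht2]
        · left; rw [permu_eq hs2, permu_eq ht2]; exact Set.pair_comm _ _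
        · exact Or.inr (Or.inr (Or.inr (Subtype.ext (hs2.trans ht2.symm))))
      · by_cases hm3 : m = 3
        · rw [hm3] at hsP htP
          rcases key3 σ.val (mem_perms3 hsP) τ.val (mem_perms3 htP) hdB with he | ⟨hsL, htL⟩
          · exact Or.inr (Or.inr (Or.inr (Subtype.ext he)))
          · right; left
            exact Set.insert_subset_iff.2 ⟨mem4set hsL, Set.singleton_subset_iff.2 (mem4set htL)⟩
        · by_cases hm4 : m = 4
          · rw [hm4] at hsP htP
            rcases key4 σ.val (mem_perms4 hsP) τ.val (mem_perms4 htP) hdB with he | ⟨hA, hB⟩ | ⟨hA, hB⟩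
            · exact Or.inr (Or.inr (Or.inr (Subtype.ext he)))
            · right; right; left; rw [permu_eq hA, permu_eq hB]
            · right; right; left; rw [permu_eq hA, permu_eq hB]; exact Set.pair_comm _ _
          · have hm5 : 5 ≤ m := by omega
            rcases reconstruct m (by omega) σ.val τ.val hsP htP hd with he | ⟨h4, _⟩
            · exact Or.inr (Or.inr (Or.inr (Subtype.ext he)))
            · omega
  · intro h
    rcases h with h | h | h | rfl
    · have hσm : σ ∈ ({p [1,2], p [2,1]} : Set Permu) := h ▸ Set.mem_insert σ {τ}
      have hτm : τ ∈ ({p [1,2], p [2,1]} : Set Permu) := h ▸ Set.mem_insert_iff.2 (Or.inr rfl)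
      simp only [Set.mem_insert_iff, Set.mem_singleton_iff] at hσm hτm
      rcases hσm with rfl | rfl <;> rcases hτm with rfl | rfl <;>
        exact shadow_eq_of_DsetEq (DsetEq_iff_B.2 (by decide))
    · have hσm : σ ∈ ({p [1,3,2], p [2,1,3], p [2,3,1], p [3,1,2]} : Set Permu) :=
        h (Set.mem_insert σ {τ})
      have hτm : τ ∈ ({p [1,3,2], p [2,1,3], p [2,3,1], p [3,1,2]} : Set Permu) :=
        h (Set.mem_insert_iff.2 (Or.inr rfl))
      simp only [Set.mem_insert_iff, Set.mem_singleton_iff] at hσm hτm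
      rcases hσm with rfl | rfl | rfl | rfl <;> rcases hτm with rfl | rfl | rfl | rfl <;>
        exact shadow_eq_of_DsetEq (DsetEq_iff_B.2 (by decide))
    · have hσm : σ ∈ ({p [2,4,1,3], p [3,1,4,2]} : Set Permu) := h ▸ Set.mem_insert σ {τ}
      have hτm : τ ∈ ({p [2,4,1,3], p [3,1,4,2]} : Set Permu) := h ▸ Set.mem_insert_iff.2 (Or.inr rfl)
      simp only [Set.mem_insert_iff, Set.mem_singleton_iff] at hσm hτm
      rcases hσm with rfl | rfl <;> rcases hτm with rfl | rfl <;>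
        exact shadow_eq_of_DsetEq (DsetEq_iff_B.2 (by decide))
    · rfl
/-- Smith: two permutations have the same shadow iff they are
{12,21}, both among {132,213,231,312}, {2413,3142}, or equal. -/
theorem statement_1 (σ τ : Permu) :
    shadow σ = shadow τ ↔
      (({σ, τ} : Set Permu) = {p [1,2], p [2,1]} ∨
       ({σ, τ} : Set Permu) ⊆ {p [1,3,2], p [2,1,3], p [2,3,1], p [3,1,2]} ∨
       ({σ, τ} : Set Permu) = {p [2,4,1,3], p [3,1,4,2]} ∨
       σ = τ) := by
  exact statement_1' σ τ
end

section
/- The exotic map ξ : Av(132, 312) → Av(132, 312), defined by π^ξ = ω⁻¹(reverse(π^ω)), is an automorphism of the pattern class Av(132, 312): it is a bijection of Av(132, 312) and for all σ, π ∈ Av(132, 312), σ is contained in π if and only if σ^ξ is contained in π^ξ. -/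
/-- The wedge class Av(132, 312). -/
def V : Set Permu := Av {p [1,3,2], p [3,1,2]}

/-- The map ω: for π of length n, the word c₂…cₙ over {a,b} where cᵢ = a
(encoded as ) iff π(i) > π(1), and cᵢ = b (encoded ) otherwise. -/
def omegaMap (l : List ℕ) : List Bool :=
  match l with
  | [] => []
  | x :: xs => xs.map (fun y => decide (x < y))


def fwAux : List Bool → ℕ → ℕ → List ℕ
  | [], _, _ => []
  | true :: w, up, down => up :: fwAux w (up+1) down
  | false :: w, up, down => down :: fwAux w up (down-1)

def cntF : List Bool → ℕ
  | [] => 0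
  | true :: w => cntF w
  | false :: w => cntF w + 1

def cntT : List Bool → ℕ
  | [] => 0
  | true :: w => cntT w + 1
  | false :: w => cntT w

lemma cnt_len (w : List Bool) : cntF w + cntT w = w.length := by
  induction w with
  | nil => rfl
  | cons b w ih => cases b <;> simp [cntF, cntT] <;> omega

lemma fwAux_length (w : List Bool) : ∀ up down, (fwAux w up down).length = w.length := by
  induction w with
  | nil => intro _ _; rfl
  | cons b w ih => intro up down; cases b <;> simp [fwAux, ih]

lemma fwAux_perm (w : List Bool) : ∀ up down, cntF w ≤ down →
    (fwAux w up down).Perm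
      (List.range' (down + 1 - cntF w) (cntF w) ++ List.range' up (cntT w)) := by
  induction w with
  | nil => intro up down _; simp [fwAux, cntF, cntT]
  | cons b w ih =>
    intro up down hd
    cases b
    · -- false
      have hf : cntF (false :: w) = cntF w + 1 := rfl
      rw [hf] at hd
      have h1 : cntF w ≤ down - 1 := by omega
      have h2 := ih up (down - 1) h1
      have e0 : down - 1 + 1 - cntF w = down - cntF w := by omega
      rw [e0] at h2
      show (down :: fwAux w up (down-1)).Perm _
      have e1 : down + 1 - cntF (false :: w) = down - cntF w := by rw [hf]; omega
      rw [e1, hf, show cntT (false :: w) = cntT w from rfl]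
      have e2 : List.range' (down - cntF w) (cntF w + 1)
          = List.range' (down - cntF w) (cntF w) ++ [down] := by
        rw [List.range'_concat]
        congr 1
        simp; omega
      rw [e2, List.append_assoc]
      exact (h2.cons down).trans List.perm_middle.symm
    · -- true
      have hf : cntF (true :: w) = cntF w := rfl
      rw [hf] at hd ⊢
      have h2 := ih (up+1) down hd
      show (up :: fwAux w (up+1) down).Perm _
      rw [show cntT (true :: w) = cntT w + 1 from rfl, List.range'_succ]
      exact (h2.cons up).trans List.perm_middle.symm

def fromWord (w : List Bool) : List ℕ := (cntF w + 1) :: fwAux w (cntF w + 2) (cntF w)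

lemma fromWord_length (w : List Bool) : (fromWord w).length = w.length + 1 := by
  simp [fromWord, fwAux_length]

lemma fromWord_perm (w : List Bool) : (fromWord w).Perm (List.range' 1 (w.length + 1)) := by
  have h := fwAux_perm w (cntF w + 2) (cntF w) le_rfl
  have e0 : cntF w + 1 - cntF w = 1 := by omega
  rw [e0] at h
  have : (fromWord w).Perm
      ((cntF w + 1) :: (List.range' 1 (cntF w) ++ List.range' (cntF w + 2) (cntT w))) :=
    h.cons _
  refine this.trans ?_
  refine (List.perm_middle.symm.trans ?_)
  have : List.range' 1 (cntF w) ++ (cntF w + 1) :: List.range' (cntF w + 2) (cntT w)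
      = List.range' 1 (cntF w) ++ List.range' (cntF w + 1) (cntT w + 1) := by
    rw [List.range'_succ]
  rw [this]
  have := List.range'_append (s := 1) (m := cntF w) (n := cntT w + 1) (step := 1)
  simp only [one_mul] at this
  rw [show 1 + cntF w = cntF w + 1 by omega] at this
  rw [this, show cntF w + (cntT w + 1) = w.length + 1 by have := cnt_len w; omega]

lemma fwAux_map (w : List Bool) : ∀ up down m, m < up → down ≤ m →
    (fwAux w up down).map (fun y => decide (m < y)) = w := by
  induction w with
  | nil => intros; rfl
  | cons b w ih =>
    intro up down m h1 h2
    cases b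
    · show (down :: fwAux w up (down-1)).map _ = _
      simp only [List.map_cons]
      rw [ih up (down-1) m h1 (by omega)]
      simp; omega
    · show (up :: fwAux w (up+1) down).map _ = _
      simp only [List.map_cons]
      rw [ih (up+1) down m (by omega) h2]
      simp; omega
lemma omegaMap_fromWord (w : List Bool) : omegaMap (fromWord w) = w := by
  show (fwAux w (cntF w + 2) (cntF w)).map (fun y => decide (cntF w + 1 < y)) = w
  exact fwAux_map w _ _ _ (by omega) (by omega)

lemma fromWord_isPerm (w : List Bool) : IsPermList (fromWord w) := by
  refine ⟨by simp [fromWord], ?_⟩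
  rw [fromWord_length]
  exact fromWord_perm w

lemma fromWord_nodup (w : List Bool) : (fromWord w).Nodup :=
  (fromWord_perm w).nodup_iff.mpr (List.nodup_range')

lemma fwAux_bnd (w : List Bool) : ∀ up down y, y ∈ fwAux w up down → y ≤ down ∨ up ≤ y := by
  induction w with
  | nil => intro _ _ y hy; simp [fwAux] at hy
  | cons b w ih =>
    intro up down y hy
    cases b
    · rcases List.mem_cons.mp hy with rfl | hy
      · left; rfl
      · rcases ih up (down-1) y hy with h | h
        · left; omega
        · right; exact h
    · rcases List.mem_cons.mp hy with rfl | hy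
      · right; rfl
      · rcases ih (up+1) down y hy with h | h
        · left; exact h
        · right; omega

def Qr (h x y : ℕ) : Prop := (h < x → h < y → x < y) ∧ (x < h → y < h → y < x)

lemma fwAux_pw (w : List Bool) : ∀ up down m, m < up → down ≤ m → cntF w ≤ down →
    (fwAux w up down).Pairwise (Qr m) := by
  induction w with
  | nil => intros; exact List.Pairwise.nil
  | cons b w ih =>
    intro up down m h1 h2 h3
    cases b
    · have hcf : cntF (false :: w) = cntF w + 1 := rfl
      rw [hcf] at h3
      show List.Pairwise (Qr m) (down :: fwAux w up (down-1))
      refine List.pairwise_cons.mpr ⟨?_, ih up (down-1) m h1 (by omega) (by omega)⟩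
      intro y hy
      rcases fwAux_bnd w up (down-1) y hy with h | h
      · exact ⟨fun hd _ => absurd hd (by omega), fun _ _ => by omega⟩
      · exact ⟨fun hd _ => absurd hd (by omega), fun _ hym => absurd hym (by omega)⟩
    · have hcf : cntF (true :: w) = cntF w := rfl
      rw [hcf] at h3
      show List.Pairwise (Qr m) (up :: fwAux w (up+1) down)
      refine List.pairwise_cons.mpr ⟨?_, ih (up+1) down m (by omega) h2 h3⟩
      intro y hy
      rcases fwAux_bnd w (up+1) down y hy with h | h
      · exact ⟨fun _ hmy => absurd hmy (by omega), fun hum _ => absurd hum (by omega)⟩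
      · exact ⟨fun _ _ => by omega, fun hum _ => absurd hum (by omega)⟩

def GoodL (l : List ℕ) : Prop := l.Nodup ∧ l.Pairwise (Qr l.headI)

lemma goodL_fromWord (w : List Bool) : GoodL (fromWord w) := by
  refine ⟨fromWord_nodup w, ?_⟩
  show List.Pairwise (Qr (cntF w + 1)) ((cntF w + 1) :: fwAux w (cntF w + 2) (cntF w))
  refine List.pairwise_cons.mpr ⟨?_, fwAux_pw w _ _ _ (by omega) (by omega) le_rfl⟩
  intro y _
  exact ⟨fun h _ => absurd h (lt_irrefl _), fun h _ => absurd h (lt_irrefl _)⟩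

lemma fwAux_reconstruct (t : List ℕ) : ∀ (h up down : ℕ),
    t.filter (fun y => decide (h < y)) = List.range' up ((t.filter (fun y => decide (h < y))).length) →
    t.filter (fun y => !decide (h < y)) =
      (List.range' (down + 1 - (t.filter (fun y => !decide (h < y))).length)
        ((t.filter (fun y => !decide (h < y))).length)).reverse →
    (t.filter (fun y => !decide (h < y))).length ≤ down →
    fwAux (t.map (fun y => decide (h < y))) up down = t := by
  induction t with
  | nil => intros; rfl
  | cons y t ih =>
    intro h up down hA hB hle
    by_cases hy : h < y
    · have hfy : decide (h < y) = true := by simp [hy]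
      rw [List.filter_cons_of_pos (by simp [hy])] at hA
      rw [List.filter_cons_of_neg (by simp [hy])] at hB hle
      rw [List.length_cons, List.range'_succ] at hA
      have hyu : y = up := (List.cons.injEq _ _ _ _ ▸ hA).1
      have hA' : t.filter (fun y => decide (h < y))
          = List.range' (up+1) ((t.filter (fun y => decide (h < y))).length) :=
        (List.cons.injEq _ _ _ _ ▸ hA).2
      show fwAux (decide (h < y) :: t.map (fun y => decide (h < y))) up down = y :: t
      rw [hfy]
      show up :: fwAux (t.map (fun y => decide (h < y))) (up+1) down = y :: t
      rw [hyu, ih h (up+1) down hA' hB hle]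
    · have hfy : decide (h < y) = false := by simp [hy]
      rw [List.filter_cons_of_neg (by simp [hy])] at hA
      rw [List.filter_cons_of_pos (by simp [hy])] at hB hle
      rw [List.length_cons] at hB hle
      set b := (t.filter (fun y => !decide (h < y))).length with hb
      have e1 : down + 1 - (b + 1) = down - b := by omega
      rw [e1, List.range'_concat, List.reverse_append, List.reverse_singleton,
        List.singleton_append] at hB
      have hyd : y = down - b + 1 * b := (List.cons.injEq _ _ _ _ ▸ hB).1
      have hyd' : y = down := by omega
      have hB' : t.filter (fun y => !decide (h < y))
          = (List.range' (down - 1 + 1 - b) b).reverse := by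
        rw [show down - 1 + 1 - b = down - b by omega]
        exact (List.cons.injEq _ _ _ _ ▸ hB).2
      show fwAux (decide (h < y) :: t.map (fun y => decide (h < y))) up down = y :: t
      rw [hfy]
      show down :: fwAux (t.map (fun y => decide (h < y))) up (down - 1) = y :: t
      rw [hyd', ih h up (down-1) hA hB' (by omega)]
def Rw (w : List Bool) : ℕ → ℕ → Prop
  | 0, 0 => False
  | 0, j+1 => w.getD j false = true
  | i+1, 0 => w.getD i false = false
  | i+1, j+1 => (w.getD i false = false ∧ w.getD j false = true)
      ∨ (w.getD i false = true ∧ w.getD j false = true ∧ i < j)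
      ∨ (w.getD i false = false ∧ w.getD j false = false ∧ j < i)

lemma omegaMap_getD (h : ℕ) (t : List ℕ) (i : ℕ) (hi : i < t.length) :
    (omegaMap (h :: t)).getD i false = decide (h < t.getD i 0) := by
  show (t.map (fun y => decide (h < y))).getD i false = _
  rw [List.getD_eq_getElem _ _ (by simpa using hi), List.getD_eq_getElem _ _ hi]
  simp

lemma char (l : List ℕ) (hne : l ≠ []) (hg : GoodL l) :
    ∀ i j, i < l.length → j < l.length →
      (l.getD i 0 < l.getD j 0 ↔ Rw (omegaMap l) i j) := by
  obtain ⟨h, t, rfl⟩ := List.exists_cons_of_ne_nil hne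
  have hnd := hg.1
  have hht : h ∉ t := (List.nodup_cons.mp hnd).1
  have hndt : t.Nodup := (List.nodup_cons.mp hnd).2
  have hpw : t.Pairwise (Qr h) := (List.pairwise_cons.mp hg.2).2
  have hgetne : ∀ i, (hi : i < t.length) → t.getD i 0 ≠ h := by
    intro i hi e
    rw [List.getD_eq_getElem _ _ hi] at e
    exact hht (e ▸ List.getElem_mem hi)
  have hq : ∀ i j, (hi : i < t.length) → (hj : j < t.length) → i < j →
      (h < t.getD i 0 → h < t.getD j 0 → t.getD i 0 < t.getD j 0) ∧
      (t.getD i 0 < h → t.getD j 0 < h → t.getD j 0 < t.getD i 0) := by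
    intro i j hi hj hij
    have q := List.pairwise_iff_getElem.mp hpw i j hi hj hij
    rw [List.getD_eq_getElem _ _ hi, List.getD_eq_getElem _ _ hj]
    exact q
  have hne' : ∀ i j, (hi : i < t.length) → (hj : j < t.length) → i ≠ j →
      t.getD i 0 ≠ t.getD j 0 := by
    intro i j hi hj hij e
    rw [List.getD_eq_getElem _ _ hi, List.getD_eq_getElem _ _ hj] at e
    exact hij (hndt.getElem_inj_iff.mp e)
  intro i j hi hj
  match i, j with
  | 0, 0 => simp [Rw, List.getD_cons_zero]
  | 0, j+1 =>
    have hj' : j < t.length := by simpa using hj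
    rw [List.getD_cons_zero, List.getD_cons_succ]
    show _ ↔ (omegaMap (h::t)).getD j false = true
    rw [omegaMap_getD h t j hj']
    simp
  | i+1, 0 =>
    have hi' : i < t.length := by simpa using hi
    rw [List.getD_cons_zero, List.getD_cons_succ]
    show _ ↔ (omegaMap (h::t)).getD i false = false
    rw [omegaMap_getD h t i hi']
    have := hgetne i hi'
    simp only [decide_eq_false_iff_not]
    omega
  | i+1, j+1 =>
    have hi' : i < t.length := by simpa using hi
    have hj' : j < t.length := by simpa using hj
    rw [List.getD_cons_succ, List.getD_cons_succ]
    show _ ↔ ((omegaMap (h::t)).getD i false = false ∧ (omegaMap (h::t)).getD j false = true)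
      ∨ ((omegaMap (h::t)).getD i false = true ∧ (omegaMap (h::t)).getD j false = true ∧ i < j)
      ∨ ((omegaMap (h::t)).getD i false = false ∧ (omegaMap (h::t)).getD j false = false ∧ j < i)
    rw [omegaMap_getD h t i hi', omegaMap_getD h t j hj']
    simp only [decide_eq_true_eq, decide_eq_false_iff_not]
    have hxh := hgetne i hi'
    have hyh := hgetne j hj'
    rcases Nat.lt_trichotomy i j with hij | hij | hij
    · have hxy := hne' i j hi' hj' (by omega)
      obtain ⟨q1, q2⟩ := hq i j hi' hj' hij
      omega
    · subst hij
      omega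
    · have hxy := hne' j i hj' hi' (by omega)
      obtain ⟨q1, q2⟩ := hq j i hj' hi' hij
      omega

lemma goodL_sub (l u : List ℕ) (hg : GoodL l) (hu : u.Sublist l) (hune : u ≠ []) :
    GoodL u ∧ (omegaMap u).Sublist (omegaMap l) := by
  have hlne : l ≠ [] := by
    rintro rfl; exact hune (List.sublist_nil.mp hu)
  obtain ⟨h, t, rfl⟩ := List.exists_cons_of_ne_nil hlne
  have hnd := hg.1
  have hht : h ∉ t := (List.nodup_cons.mp hnd).1
  have hpw : t.Pairwise (Qr h) := (List.pairwise_cons.mp hg.2).2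
  rcases List.sublist_cons_iff.mp hu with hut | ⟨r, rfl, hrt⟩
  · obtain ⟨u₀, s, rfl⟩ := List.exists_cons_of_ne_nil hune
    have hnu : (u₀ :: s).Nodup := List.Nodup.sublist hu hnd
    have hpwu : (u₀ :: s).Pairwise (Qr h) := hpw.sublist hut
    have hmem : ∀ x ∈ u₀ :: s, x ∈ t := fun x hx => hut.subset hx
    have hu0 : u₀ ≠ h := fun e => hht (e ▸ hmem u₀ List.mem_cons_self)
    have htr : ∀ x ∈ s, (u₀ < x ↔ h < x) ∧ x ≠ h := by
      intro x hx
      have q := List.rel_of_pairwise_cons hpwu hx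
      have hxh : x ≠ h := fun e => hht (e ▸ hmem x (List.mem_cons_of_mem _ hx))
      have hxu : u₀ ≠ x := fun e =>
        (List.nodup_cons.mp hnu).1 (e ▸ hx)
      obtain ⟨q1, q2⟩ := q
      exact ⟨by omega, hxh⟩
    have hωe : omegaMap (u₀ :: s) = s.map (fun y => decide (h < y)) := by
      show s.map _ = _
      refine List.map_congr_left ?_
      intro x hx
      simpa only [decide_eq_decide] using (htr x hx).1
    constructor
    · refine ⟨hnu, ?_⟩
      show (u₀ :: s).Pairwise (Qr u₀)
      refine List.pairwise_cons.mpr ⟨fun y _ =>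
        ⟨fun a _ => absurd a (lt_irrefl _), fun a _ => absurd a (lt_irrefl _)⟩, ?_⟩
      have hpws : s.Pairwise (Qr h) := (List.pairwise_cons.mp hpwu).2
      refine hpws.imp_of_mem ?_
      intro a b ha hb q
      obtain ⟨ta, tah⟩ := htr a ha
      obtain ⟨tb, tbh⟩ := htr b hb
      obtain ⟨q1, q2⟩ := q
      constructor <;> intro h1 h2 <;> omega
    · rw [hωe]
      show List.Sublist _ (t.map (fun y => decide (h < y)))
      exact ((List.sublist_cons_self u₀ s).trans hut).map _
  · constructor
    · exact ⟨List.Nodup.sublist hu hnd, hg.2.sublist hu⟩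
    · show List.Sublist (r.map (fun y => decide (h < y))) (t.map (fun y => decide (h < y)))
      exact hrt.map _
lemma good_mem_V (π : Permu) (hg : GoodL π.val) : π ∈ V := by
  have hlne : π.val ≠ [] := π.2.1
  obtain ⟨h, t, hval⟩ := List.exists_cons_of_ne_nil hlne
  have hnd : (h :: t).Nodup := by rw [← hval]; exact hg.1
  have hht : h ∉ t := (List.nodup_cons.mp hnd).1
  have hpw : List.Pairwise (Qr h) (h :: t) := by
    have h2 := hg.2; rw [hval] at h2; exact h2
  have hpwt : List.Pairwise (Qr h) t := (List.pairwise_cons.mp hpw).2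
  have key : ∀ x y z : ℕ, [x,y,z].Sublist (h :: t) →
      (x < z → z < y → False) ∧ (y < z → z < x → False) := by
    intro x y z hs
    rcases List.sublist_cons_iff.mp hs with hs' | ⟨r, heq, hrt⟩
    · have hpq : List.Pairwise (Qr h) [x,y,z] := hpwt.sublist hs'
      have qxy : Qr h x y := List.rel_of_pairwise_cons hpq (by simp)
      have qxz : Qr h x z := List.rel_of_pairwise_cons hpq (by simp)
      have qyz : Qr h y z :=
        List.rel_of_pairwise_cons (List.pairwise_cons.mp hpq).2 (by simp)
      have hxh : x ≠ h := fun e => hht (e ▸ hs'.subset (by simp))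
      have hyh : y ≠ h := fun e => hht (e ▸ hs'.subset (by simp))
      have hzh : z ≠ h := fun e => hht (e ▸ hs'.subset (by simp))
      obtain ⟨a1, a2⟩ := qxy
      obtain ⟨b1, b2⟩ := qxz
      obtain ⟨c1, c2⟩ := qyz
      constructor <;> intro h1 h2 <;> omega
    · have hx : x = h := (List.cons.injEq _ _ _ _ ▸ heq).1
      have hr : [y, z] = r := (List.cons.injEq _ _ _ _ ▸ heq).2
      have hyz : List.Pairwise (Qr h) [y,z] := hpwt.sublist (hr ▸ hrt)
      have qyz : Qr h y z := List.rel_of_pairwise_cons hyz (by simp)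
      have hyh : y ≠ h := fun e => hht (e ▸ (hr ▸ hrt).subset (by simp))
      have hzh : z ≠ h := fun e => hht (e ▸ (hr ▸ hrt).subset (by simp))
      obtain ⟨c1, c2⟩ := qyz
      constructor <;> intro h1 h2 <;> omega
  intro β hβ hcont
  obtain ⟨u, hsub, hlen, hiso⟩ := hcont
  simp only [Set.mem_insert_iff, Set.mem_singleton_iff] at hβ
  rcases hβ with rfl | rfl
  · have hlen3 : u.length = 3 := hlen
    obtain ⟨x, y, z, rfl⟩ := List.length_eq_three.mp hlen3
    have hxz : x < z := by
      have := (hiso 0 2 (by simp) (by simp)).mpr (by decide)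
      simpa using this
    have hzy : z < y := by
      have := (hiso 2 1 (by simp) (by simp)).mpr (by decide)
      simpa using this
    exact (key x y z (hval ▸ hsub)).1 hxz hzy
  · have hlen3 : u.length = 3 := hlen
    obtain ⟨x, y, z, rfl⟩ := List.length_eq_three.mp hlen3
    have hyz : y < z := by
      have := (hiso 1 2 (by simp) (by simp)).mpr (by decide)
      simpa using this
    have hzx : z < x := by
      have := (hiso 2 0 (by simp) (by simp)).mpr (by decide)
      simpa using this
    exact (key x y z (hval ▸ hsub)).2 hyz hzx

lemma mem_V_good (π : Permu) (hπ : π ∈ V) : GoodL π.val := by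
  have hnd : π.val.Nodup := π.2.2.nodup_iff.mpr (List.nodup_range')
  refine ⟨hnd, ?_⟩
  obtain ⟨h, t, hval⟩ := List.exists_cons_of_ne_nil π.2.1
  have hgoal : List.Pairwise (Qr h) π.val → List.Pairwise (Qr π.val.headI) π.val := by
    rw [hval]; exact id
  apply hgoal
  rw [List.pairwise_iff_forall_sublist]
  intro a b hab
  have hne : a ≠ b := by
    have h2 := List.Nodup.sublist hab hnd
    simp [List.nodup_cons] at h2
    exact h2
  have habt : h < a ∨ a < h → [a,b].Sublist t := by
    intro hah
    rcases List.sublist_cons_iff.mp (hval ▸ hab) with h' | ⟨r, heq, _⟩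
    · exact h'
    · exfalso
      have : a = h := (List.cons.injEq _ _ _ _ ▸ heq).1
      omega
  constructor
  · intro hha hhb
    by_contra hcon
    have hba : b < a := by omega
    have hsub : [h, a, b].Sublist π.val := by
      rw [hval]; exact (habt (Or.inl hha)).cons₂ h
    refine hπ (p [1,3,2]) (by simp) ⟨[h,a,b], hsub, rfl, ?_⟩
    intro i j hi hj
    simp only [List.length_cons, List.length_nil] at hi hj
    interval_cases i <;> interval_cases j <;>
      (simp only [p, List.getD_cons_zero, List.getD_cons_succ]; omega)
  · intro hah hbh
    by_contra hcon
    have hab' : a < b := by omega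
    have hsub : [h, a, b].Sublist π.val := by
      rw [hval]; exact (habt (Or.inr hah)).cons₂ h
    refine hπ (p [3,1,2]) (by simp) ⟨[h,a,b], hsub, rfl, ?_⟩
    intro i j hi hj
    simp only [List.length_cons, List.length_nil] at hi hj
    interval_cases i <;> interval_cases j <;>
      (simp only [p, List.getD_cons_zero, List.getD_cons_succ]; omega)
lemma cntF_map {α : Type*} (f : α → Bool) (t : List α) :
    cntF (t.map f) = (t.filter (fun y => !f y)).length := by
  induction t with
  | nil => rfl
  | cons y t ih =>
    simp only [List.map_cons]
    cases hf : f y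
    · rw [List.filter_cons_of_pos (by simp [hf])]
      show cntF (t.map f) + 1 = _
      rw [ih]; simp
    · rw [List.filter_cons_of_neg (by simp [hf])]
      exact ih

lemma fromWord_omegaMap (l : List ℕ) (hp : IsPermList l) (hg : GoodL l) :
    fromWord (omegaMap l) = l := by
  obtain ⟨h, t, rfl⟩ := List.exists_cons_of_ne_nil hp.1
  have hperm := hp.2
  rw [List.length_cons] at hperm
  set n := t.length + 1 with hn
  have hmem : h ∈ List.range' 1 n := hperm.subset List.mem_cons_self
  have hh1 : 1 ≤ h ∧ h < 1 + n := List.mem_range'_1.mp hmem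
  have hnd : (h :: t).Nodup := hg.1
  have hht : h ∉ t := (List.nodup_cons.mp hnd).1
  have hpw : t.Pairwise (Qr h) := (List.pairwise_cons.mp hg.2).2
  have htperm : t.Perm ((List.range' 1 n).erase h) :=
    (hperm.trans (List.perm_cons_erase hmem)).cons_inv
  have hsplit : List.range' 1 n = List.range' 1 (h-1) ++ List.range' h (n - h + 1) := by
    have e := List.range'_append (s := 1) (m := h-1) (n := n-h+1) (step := 1)
    simp only [one_mul] at e
    rw [show 1 + (h-1) = h by omega] at e
    rw [show h - 1 + (n - h + 1) = n by omega] at e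
    exact e.symm
  have herase : (List.range' 1 n).erase h
      = List.range' 1 (h-1) ++ List.range' (h+1) (n-h) := by
    rw [hsplit, List.range'_succ,
      List.erase_append_right _ (by
        intro hmem'
        have := List.mem_range'_1.mp hmem'
        omega),
      List.erase_cons_head]
  haveI : IsAntisymm ℕ (· < ·) := ⟨fun a b h1 h2 => absurd h2 (Nat.lt_asymm h1)⟩
  haveI : IsAntisymm ℕ (· > ·) := ⟨fun a b h1 h2 => absurd h2 (Nat.lt_asymm h1)⟩
  have hfA : t.filter (fun y => decide (h < y)) = List.range' (h+1) (n-h) := by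
    have h1 : List.filter (fun y => decide (h < y)) (List.range' 1 (h-1)) = [] := by
      rw [List.filter_eq_nil_iff]
      intro a ha
      have := List.mem_range'_1.mp ha
      simp only [decide_eq_true_eq]
      omega
    have h2 : List.filter (fun y => decide (h < y)) (List.range' (h+1) (n-h))
        = List.range' (h+1) (n-h) := by
      rw [List.filter_eq_self]
      intro a ha
      have := List.mem_range'_1.mp ha
      simp only [decide_eq_true_eq]
      omega
    have hpermA : (t.filter (fun y => decide (h < y))).Perm (List.range' (h+1) (n-h)) := by
      refine (htperm.filter _).trans ?_
      rw [herase, List.filter_append, h1, h2, List.nil_append]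
    have hsorted : List.Pairwise (· < ·) (t.filter (fun y => decide (h < y))) := by
      refine (hpw.filter _).imp_of_mem ?_
      intro a b ha hb q
      have ha' := List.mem_filter.mp ha
      have hb' := List.mem_filter.mp hb
      exact q.1 (by simpa using ha'.2) (by simpa using hb'.2)
    exact List.Perm.eq_of_pairwise' hsorted (List.pairwise_lt_range') hpermA
  have hfB : t.filter (fun y => !decide (h < y)) = (List.range' 1 (h-1)).reverse := by
    have h1 : List.filter (fun y => !decide (h < y)) (List.range' 1 (h-1))
        = List.range' 1 (h-1) := by
      rw [List.filter_eq_self]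
      intro a ha
      have := List.mem_range'_1.mp ha
      simp only [Bool.not_eq_true', decide_eq_false_iff_not]
      omega
    have h2 : List.filter (fun y => !decide (h < y)) (List.range' (h+1) (n-h)) = [] := by
      rw [List.filter_eq_nil_iff]
      intro a ha
      have := List.mem_range'_1.mp ha
      simp only [Bool.not_eq_true', decide_eq_false_iff_not, not_not]
      omega
    have hpermB : (t.filter (fun y => !decide (h < y))).Perm ((List.range' 1 (h-1)).reverse) := by
      refine (htperm.filter _).trans ?_
      rw [herase, List.filter_append, h1, h2, List.append_nil]
      exact (List.reverse_perm _).symm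
    have hsorted : List.Pairwise (· > ·) (t.filter (fun y => !decide (h < y))) := by
      refine (hpw.filter _).imp_of_mem ?_
      intro a b ha hb q
      have ha' := List.mem_filter.mp ha
      have hb' := List.mem_filter.mp hb
      have ha2 : ¬ h < a := by simpa using ha'.2
      have hb2 : ¬ h < b := by simpa using hb'.2
      have hane : a ≠ h := fun e => hht (e ▸ ha'.1)
      have hbne : b ≠ h := fun e => hht (e ▸ hb'.1)
      exact q.2 (by omega) (by omega)
    have hsorted2 : List.Pairwise (· > ·) ((List.range' 1 (h-1)).reverse) := by
      rw [List.pairwise_reverse]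
      exact List.pairwise_lt_range'
    exact List.Perm.eq_of_pairwise' hsorted hsorted2 hpermB
  have hlenB : (t.filter (fun y => !decide (h < y))).length = h - 1 := by
    rw [hfB]; simp
  have hlenA : (t.filter (fun y => decide (h < y))).length = n - h := by
    rw [hfA]; simp
  have hcnt : cntF (t.map (fun y => decide (h < y))) = h - 1 := by
    rw [cntF_map, hlenB]
  show fromWord (t.map (fun y => decide (h < y))) = h :: t
  rw [fromWord, hcnt]
  have hrec := fwAux_reconstruct t h (h+1) (h-1)
    (by rw [hlenA, hfA]) (by rw [hlenB, hfB, show h - 1 + 1 - (h-1) = 1 by omega])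
    (by rw [hlenB])
  rw [show h - 1 + 2 = h + 1 by omega, hrec, show h - 1 + 1 = h by omega]

lemma contains_of_word_sublist (w' w : List Bool) (hs : w'.Sublist w) :
    Contains ⟨fromWord w', fromWord_isPerm w'⟩ ⟨fromWord w, fromWord_isPerm w⟩ := by
  have hs2 : w'.Sublist ((fwAux w (cntF w + 2) (cntF w)).map
      (fun y => decide (cntF w + 1 < y))) := by
    have := omegaMap_fromWord w
    rw [show omegaMap (fromWord w)
      = (fwAux w (cntF w + 2) (cntF w)).map (fun y => decide (cntF w + 1 < y)) from rfl] at this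
    rw [this]; exact hs
  obtain ⟨s, hst, hmap⟩ := List.sublist_map_iff.mp hs2
  set h := cntF w + 1 with hh
  have hsub : ((h :: s)).Sublist (fromWord w) := List.Sublist.cons₂ h hst
  have hgu : GoodL (h :: s) := by
    refine ⟨List.Nodup.sublist hsub (fromWord_nodup w), ?_⟩
    show List.Pairwise (Qr h) (h :: s)
    exact ((goodL_fromWord w).2).sublist hsub
  have hωu : omegaMap (h :: s) = w' := by
    rw [hmap]; rfl
  have hlen : (h :: s).length = (fromWord w').length := by
    rw [fromWord_length, List.length_cons, show s.length = w'.length by rw [hmap, List.length_map]]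
  refine ⟨h :: s, hsub, hlen, ?_⟩
  intro i j hi hj
  have c1 := char (h :: s) (by simp) hgu i j hi hj
  have c2 := char (fromWord w') (by simp [fromWord]) (goodL_fromWord w') i j
    (by rw [← hlen]; exact hi) (by rw [← hlen]; exact hj)
  rw [hωu] at c1
  rw [omegaMap_fromWord] at c2
  exact c1.trans c2.symm

lemma omegaMap_length (l : List ℕ) : (omegaMap l).length = l.length - 1 := by
  cases l <;> simp [omegaMap]

lemma word_sublist_of_contains (σ π : Permu) (hσ : GoodL σ.val) (hπ : GoodL π.val)
    (hc : Contains σ π) : (omegaMap σ.val).Sublist (omegaMap π.val) := by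
  obtain ⟨u, hsub, hlen, hiso⟩ := hc
  have hune : u ≠ [] := by
    intro e
    rw [e] at hlen
    exact σ.2.1 (List.length_eq_zero_iff.mp hlen.symm)
  obtain ⟨hgu, hww⟩ := goodL_sub π.val u hπ hsub hune
  have heq : omegaMap σ.val = omegaMap u := by
    obtain ⟨u₀, u', hu⟩ := List.exists_cons_of_ne_nil hune
    obtain ⟨s₀, s', hsval⟩ := List.exists_cons_of_ne_nil σ.2.1
    refine List.ext_getElem (by rw [omegaMap_length, omegaMap_length, hlen]) ?_
    intro i h1 h2
    have hσlen : i < s'.length := by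
      rw [omegaMap_length, hsval] at h1
      simpa using h1
    have hulen : i < u'.length := by
      rw [omegaMap_length, hu] at h2
      simpa using h2
    have hb1 : i + 1 < u.length := by rw [hu]; simpa using hulen
    have hb2 : i + 1 < u.length := hb1
    rw [← List.getD_eq_getElem _ false h1, ← List.getD_eq_getElem _ false h2,
      hsval, hu, omegaMap_getD s₀ s' i hσlen, omegaMap_getD u₀ u' i hulen,
      decide_eq_decide]
    have := (hiso 0 (i+1) (by omega) hb1).symm
    rw [hu, hsval] at this
    simpa using this
  rw [heq]
  exact hww


/-- the exotic map ξ = ω ∘ reverse ∘ ω⁻¹, i.e. the map on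
Av(132,312) characterised by ω(π^ξ) = reverse(ω(π)), is an automorphism of
the pattern class Av(132, 312). -/
theorem statement_4 :
    ∃ ξ : Permu → Permu,
      (∀ π : Permu, π ∈ V →
        ξ π ∈ V ∧ omegaMap (ξ π).val = (omegaMap π.val).reverse) ∧
      Set.BijOn ξ V V ∧
      (∀ σ π : Permu, σ ∈ V → π ∈ V →
        (Contains σ π ↔ Contains (ξ σ) (ξ π))) := by
  refine ⟨fun π => ⟨fromWord ((omegaMap π.val).reverse), fromWord_isPerm _⟩, ?_⟩
  set ξ : Permu → Permu := fun π => ⟨fromWord ((omegaMap π.val).reverse), fromWord_isPerm _⟩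
    with hξ
  have hmaps : ∀ π : Permu, ξ π ∈ V := fun π => good_mem_V _ (goodL_fromWord _)
  have hword : ∀ π : Permu, omegaMap (ξ π).val = (omegaMap π.val).reverse :=
    fun π => omegaMap_fromWord _
  have hinv : ∀ π : Permu, π ∈ V → ξ (ξ π) = π := by
    intro π hπ
    apply Subtype.ext
    show fromWord ((omegaMap (ξ π).val).reverse) = π.val
    rw [hword, List.reverse_reverse]
    exact fromWord_omegaMap π.val π.2 (mem_V_good π hπ)
  have hfwd : ∀ σ π : Permu, σ ∈ V → π ∈ V → Contains σ π → Contains (ξ σ) (ξ π) := by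
    intro σ π hσ hπ hc
    have hws := word_sublist_of_contains σ π (mem_V_good σ hσ) (mem_V_good π hπ) hc
    exact contains_of_word_sublist _ _ hws.reverse
  refine ⟨fun π hπ => ⟨hmaps π, hword π⟩, ?_, ?_⟩
  · exact Set.InvOn.bijOn ⟨fun π hπ => hinv π hπ, fun π hπ => hinv π hπ⟩
      (fun π _ => hmaps π) (fun π _ => hmaps π)
  · intro σ π hσ hπ
    constructor
    · exact hfwd σ π hσ hπ
    · intro hc
      have := hfwd (ξ σ) (ξ π) (hmaps σ) (hmaps π) hc
      rwa [hinv σ hσ, hinv π hπ] at this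
end
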